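/- arXiv:2410.21417 — 11 statements merged into one kernel-verified Lean document; each statement's English description precedes it below -/
import Mathlib

section
/- Let H be a finite-dimensional complex inner product space, S ⊆ H a set of unit vectors, V = span(S), and P the orthogonal projection of H onto V. Suppose Q : H → H is a linear operator satisfying 0 ≤ ⟪x, Q x⟫ and ⟪x, Q x⟫ ≤ ‖x‖² for all x ∈ H (with ⟪x, Q x⟫ real for all x, i.e. Q is a positive contraction), and ⟪φ, Q φ⟫ = 1 for every φ ∈ S. Then Q x = x for every x ∈ V, and ⟪ψ, P ψ⟫ ≤ ⟪ψ, Q ψ⟫ for every ψ ∈ H. -/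
open scoped InnerProductSpace ComplexOrder

/-- Cauchy–Schwarz-type degeneracy: a symmetric positive operator vanishing on the diagonal
at `φ` kills `φ`. -/
lemma aux_zero {H : Type*} [NormedAddCommGroup H] [InnerProductSpace ℂ H]
    (T : H →ₗ[ℂ] H) (hsym : T.IsSymmetric)
    (hpos : ∀ x : H, 0 ≤ (⟪x, T x⟫_ℂ).re) (φ : H)
    (h0 : (⟪φ, T φ⟫_ℂ).re = 0) : T φ = 0 := by
  by_contra hne
  set a : ℝ := ‖T φ‖ ^ 2 with ha
  have ha0 : 0 < a := by
    rw [ha]; exact pow_pos (norm_pos_iff.mpr hne) 2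
  set b : ℝ := (⟪T φ, T (T φ)⟫_ℂ).re with hb
  have hb0 : 0 ≤ b := hpos (T φ)
  set t : ℝ := a / (b + 1) with ht
  have ht0 : 0 < t := div_pos ha0 (by linarith)
  have key := hpos (φ - (t : ℂ) • T φ)
  have hTT : ⟪φ, T (T φ)⟫_ℂ = ⟪T φ, T φ⟫_ℂ := (hsym φ (T φ)).symm
  have hself : ⟪T φ, T φ⟫_ℂ = ((a : ℝ) : ℂ) := by
    rw [ha]; push_cast; exact inner_self_eq_norm_sq_to_K (𝕜 := ℂ) (T φ)
  have hexp : ⟪φ - (t : ℂ) • T φ, T (φ - (t : ℂ) • T φ)⟫_ℂ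
      = ⟪φ, T φ⟫_ℂ - (t : ℂ) * ((a : ℝ) : ℂ) - (t : ℂ) * ((a : ℝ) : ℂ)
        + (t : ℂ) * (t : ℂ) * ⟪T φ, T (T φ)⟫_ℂ := by
    rw [map_sub, map_smul]
    rw [inner_sub_left, inner_sub_right, inner_sub_right, inner_smul_left, inner_smul_left,
      inner_smul_right, inner_smul_right, hTT, hself]
    simp [Complex.conj_ofReal]
    ring
  rw [hexp] at key
  simp only [Complex.add_re, Complex.sub_re, Complex.mul_re, Complex.mul_im,
    Complex.ofReal_re, Complex.ofReal_im, h0, ← hb] at key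
  have htb : t * b < a := by
    rw [ht, div_mul_eq_mul_div, div_lt_iff₀ (by linarith)]
    nlinarith
  nlinarith [key, mul_pos ht0 ha0, ht0.le]

/-- If `Q` is a positive contraction on a finite-dimensional complex inner product space `H`
which accepts every unit vector in `S` with certainty, then `Q` acts as the identity on
`span S`, and the orthogonal projection onto `span S` is dominated by `Q`. -/
theorem stmt0 {H : Type*} [NormedAddCommGroup H] [InnerProductSpace ℂ H]
    [FiniteDimensional ℂ H] (S : Set H) (hS : ∀ φ ∈ S, ‖φ‖ = 1)
    (Q : H →ₗ[ℂ] H)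
    (hpos : ∀ x : H, 0 ≤ ⟪x, Q x⟫_ℂ)
    (hcontr : ∀ x : H, ⟪x, Q x⟫_ℂ ≤ ((‖x‖ ^ 2 : ℝ) : ℂ))
    (hone : ∀ φ ∈ S, ⟪φ, Q φ⟫_ℂ = 1) :
    (∀ x ∈ Submodule.span ℂ S, Q x = x) ∧
    (∀ ψ : H,
      ⟪ψ, ((Submodule.orthogonalProjectionOnto (Submodule.span ℂ S) ψ : H))⟫_ℂ ≤ ⟪ψ, Q ψ⟫_ℂ) := by
  have him : ∀ x : H, (⟪x, Q x⟫_ℂ).im = 0 := fun x => by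
    have := (Complex.le_def.mp (hpos x)).2
    simpa using this.symm
  have hsym : Q.IsSymmetric := by
    rw [LinearMap.isSymmetric_iff_inner_map_self_real]
    intro v
    apply Complex.conj_eq_iff_im.mpr
    rw [← inner_conj_symm, Complex.conj_im, neg_eq_zero]
    exact him v
  -- T := id - Q is symmetric and positive
  set T : H →ₗ[ℂ] H := LinearMap.id - Q with hT
  have hTsym : T.IsSymmetric := LinearMap.IsSymmetric.sub LinearMap.IsSymmetric.id hsym
  have hTpos : ∀ x : H, 0 ≤ (⟪x, T x⟫_ℂ).re := by
    intro x
    have h1 := (Complex.le_def.mp (hcontr x)).1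
    have hx : ⟪x, T x⟫_ℂ = ((‖x‖ ^ 2 : ℝ) : ℂ) - ⟪x, Q x⟫_ℂ := by
      simp only [hT, LinearMap.sub_apply, LinearMap.id_apply, inner_sub_right,
        inner_self_eq_norm_sq_to_K (𝕜 := ℂ) x]
      norm_cast
    rw [hx]
    simp only [Complex.sub_re, Complex.ofReal_re]
    rw [Complex.ofReal_re] at h1
    linarith
  -- Q fixes every element of S, hence of span S
  have hfix : ∀ x ∈ Submodule.span ℂ S, Q x = x := by
    have hSfix : ∀ φ ∈ S, T φ = 0 := by
      intro φ hφ
      apply aux_zero T hTsym hTpos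
      have : ⟪φ, T φ⟫_ℂ = ((‖φ‖ ^ 2 : ℝ) : ℂ) - 1 := by
        simp only [hT, LinearMap.sub_apply, LinearMap.id_apply, inner_sub_right,
          inner_self_eq_norm_sq_to_K (𝕜 := ℂ) φ, hone φ hφ]
        push_cast [RCLike.ofReal_pow, Complex.coe_algebraMap]
        rfl
      rw [this, hS φ hφ]
      norm_num
    have hle : Submodule.span ℂ S ≤ LinearMap.eqLocus Q LinearMap.id := by
      rw [Submodule.span_le]
      intro φ hφ
      have := hSfix φ hφ
      rw [hT] at this
      simp only [LinearMap.sub_apply, LinearMap.id_apply, sub_eq_zero] at this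
      exact this.symm
    intro x hx
    exact hle hx
  refine ⟨hfix, ?_⟩
  intro ψ
  set V := Submodule.span ℂ S
  set p : H := (Submodule.orthogonalProjectionOnto V ψ : H) with hp
  set w : H := ψ - p with hw
  have hpV : p ∈ V := (Submodule.orthogonalProjectionOnto V ψ).2
  have hwV : w ∈ Vᗮ := Submodule.sub_starProjection_mem_orthogonal (K := V) ψ
  have hpw : ⟪p, w⟫_ℂ = 0 := hwV p hpV
  have hwp : ⟪w, p⟫_ℂ = 0 := by
    rw [← inner_conj_symm, hpw, map_zero]
  have hψ : ψ = p + w := by rw [hw]; abel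
  have hQp : Q p = p := hfix p hpV
  have hQexp : ⟪ψ, Q ψ⟫_ℂ = ⟪ψ, p⟫_ℂ + ⟪w, Q w⟫_ℂ := by
    have hpQw : ⟪p, Q w⟫_ℂ = 0 := by
      rw [← hsym p w, hQp, hpw]
    calc ⟪ψ, Q ψ⟫_ℂ = ⟪p + w, Q p + Q w⟫_ℂ := by rw [← hψ, ← map_add, ← hψ]
      _ = ⟪p, p⟫_ℂ + ⟪p, Q w⟫_ℂ + (⟪w, p⟫_ℂ + ⟪w, Q w⟫_ℂ) := by
          rw [inner_add_left, inner_add_right, inner_add_right, hQp]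
      _ = ⟪p, p⟫_ℂ + ⟪w, Q w⟫_ℂ := by rw [hpQw, hwp]; ring
      _ = ⟪ψ, p⟫_ℂ + ⟪w, Q w⟫_ℂ := by
          rw [hψ, inner_add_left, hwp, add_zero]
  rw [hQexp]
  exact le_add_of_nonneg_right (hpos w)
end

section
/- Let n ≥ 2 be an integer, set m := n − 1 and α := ln(4m) (natural logarithm). Let r be an integer with r ≥ max{50, 1 + α}, let ε ∈ (0, 1/√6], let d be an integer with d ≥ 2r − 1, and let p be the probability vector on {1, …, d} with p₁ = 1 − 4ε²/m and p_j = 4ε²/(m(d − 1)) for 2 ≤ j ≤ d. Then for every positive integer N with N ≤ m r² / (400 α ε²), the probability, under the i.i.d. distribution p^{⊗N} on words of length N over the ordered alphabet {1, …, d}, that the word has no strictly decreasing subsequence of length r + 1 (i.e., LDS(w) ≤ r) is at least 2^{−1/m}. -/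
private lemma marg_aux {N d r : ℕ} (p : Fin d → ℝ) (hsum : ∑ j, p j = 1)
    (g : Fin r → Fin N) (hg : Function.Injective g) (v : Fin r → Fin d) :
    ∑ w : Fin N → Fin d, (if ∀ k, w (g k) = v k then ∏ i, p (w i) else 0)
      = ∏ k, p (v k) := by
  classical
  set F : Fin N → Fin d → ℝ := fun i j =>
    if h : ∃ k, g k = i then (if j = v h.choose then p j else 0) else p j with hF
  have key : ∀ w : Fin N → Fin d,
      (if ∀ k, w (g k) = v k then ∏ i, p (w i) else 0) = ∏ i, F i (w i) := by
    intro w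
    by_cases hw : ∀ k, w (g k) = v k
    · rw [if_pos hw]
      refine Finset.prod_congr rfl fun i _ => ?_
      by_cases h : ∃ k, g k = i
      · have hk : g h.choose = i := h.choose_spec
        have hwv : w i = v h.choose := by
          have e : w i = w (g h.choose) := by rw [hk]
          exact e.trans (hw h.choose)
        simp [hF, dif_pos h, hwv]
      · simp [hF, dif_neg h]
    · rw [if_neg hw]
      push_neg at hw
      obtain ⟨k, hk⟩ := hw
      refine (Finset.prod_eq_zero (Finset.mem_univ (g k)) ?_).symm
      have h : ∃ k', g k' = g k := ⟨k, rfl⟩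
      have hc : h.choose = k := hg h.choose_spec
      simp [hF, dif_pos h, hc, hk]
  rw [Finset.sum_congr rfl fun w _ => key w]
  have hpi := Finset.sum_prod_piFinset (Finset.univ : Finset (Fin d)) F
  rw [Fintype.piFinset_univ] at hpi
  rw [hpi]
  have hcol : ∀ i, (∑ j, F i j) = if h : ∃ k, g k = i then p (v h.choose) else 1 := by
    intro i
    by_cases h : ∃ k, g k = i
    · rw [dif_pos h]
      simp only [hF, dif_pos h]
      simp
    · rw [dif_neg h]
      simp only [hF, dif_neg h]
      exact hsum
  rw [Finset.prod_congr rfl fun i _ => hcol i]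
  rw [← Finset.prod_mul_prod_compl (Finset.image g Finset.univ)]
  have h2 : ∀ i ∈ (Finset.image g Finset.univ)ᶜ,
      (if h : ∃ k, g k = i then p (v h.choose) else 1) = 1 := by
    intro i hi
    rw [dif_neg]
    rintro ⟨k, rfl⟩
    simp at hi
  rw [Finset.prod_congr rfl h2, Finset.prod_const_one, mul_one]
  rw [Finset.prod_image (by intro a _ b _ hab; exact hg hab)]
  refine Finset.prod_congr rfl fun k _ => ?_
  have h : ∃ k', g k' = g k := ⟨k, rfl⟩
  rw [dif_pos h, hg h.choose_spec]


private lemma card_SM_le (r M : ℕ) :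
    (Finset.univ.filter (fun g : Fin r → Fin M => StrictMono g)).card ≤ M.choose r := by
  classical
  have hpc : ((Finset.univ : Finset (Fin M)).powersetCard r).card = M.choose r := by
    rw [Finset.card_powersetCard, Finset.card_univ, Fintype.card_fin]
  rw [← hpc]
  apply Finset.card_le_card_of_injOn (fun g => Finset.image g Finset.univ)
  · intro g hg
    rw [Finset.mem_coe, Finset.mem_filter] at hg
    rw [Finset.mem_coe, Finset.mem_powersetCard]
    exact ⟨Finset.subset_univ _, by
      rw [Finset.card_image_of_injective _ hg.2.injective, Finset.card_univ, Fintype.card_fin]⟩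
  · intro g₁ h₁ g₂ h₂ he
    have he' : Finset.image g₁ Finset.univ = Finset.image g₂ Finset.univ := he
    simp only [Finset.coe_filter, Set.mem_setOf_eq, Finset.mem_univ, true_and] at h₁ h₂
    have c1 : (Finset.image g₁ Finset.univ).card = r := by
      rw [Finset.card_image_of_injective _ h₁.injective, Finset.card_univ, Fintype.card_fin]
    have e1 : g₁ = (Finset.image g₁ Finset.univ).orderEmbOfFin c1 :=
      Finset.orderEmbOfFin_unique c1
        (fun x => Finset.mem_image_of_mem _ (Finset.mem_univ x)) h₁
    have e2 : g₂ = (Finset.image g₁ Finset.univ).orderEmbOfFin c1 :=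
      Finset.orderEmbOfFin_unique c1
        (fun x => by rw [he']; exact Finset.mem_image_of_mem _ (Finset.mem_univ x)) h₂
    rw [e1, e2]

private lemma card_SA_le (r d : ℕ) (hd : 1 ≤ d) :
    (Finset.univ.filter
      (fun v : Fin r → Fin d => StrictAnti v ∧ ∀ k, (v k : ℕ) ≠ 0)).card
      ≤ (d - 1).choose r := by
  classical
  haveI : NeZero d := ⟨by omega⟩
  have hpc : ((Finset.univ.erase (0 : Fin d)).powersetCard r).card = (d - 1).choose r := by
    rw [Finset.card_powersetCard, Finset.card_erase_of_mem (Finset.mem_univ _),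
      Finset.card_univ, Fintype.card_fin]
  rw [← hpc]
  apply Finset.card_le_card_of_injOn (fun v => Finset.image v Finset.univ)
  · intro v hv
    rw [Finset.mem_coe, Finset.mem_filter] at hv
    rw [Finset.mem_coe, Finset.mem_powersetCard]
    constructor
    · intro j hj
      rw [Finset.mem_image] at hj
      obtain ⟨k, _, rfl⟩ := hj
      rw [Finset.mem_erase]
      refine ⟨?_, Finset.mem_univ _⟩
      intro h0
      exact hv.2.2 k (by rw [h0]; rfl)
    · rw [Finset.card_image_of_injective _ hv.2.1.injective, Finset.card_univ, Fintype.card_fin]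
  · intro v₁ h₁ v₂ h₂ he
    have he' : Finset.image v₁ Finset.univ = Finset.image v₂ Finset.univ := he
    simp only [Finset.coe_filter, Set.mem_setOf_eq, Finset.mem_univ, true_and] at h₁ h₂
    -- use rev composition
    have m₁ : StrictMono (v₁ ∘ Fin.rev) := fun a b hab => h₁.1 (by rwa [Fin.rev_lt_rev])
    have m₂ : StrictMono (v₂ ∘ Fin.rev) := fun a b hab => h₂.1 (by rwa [Fin.rev_lt_rev])
    have him : ∀ v : Fin r → Fin d,
        Finset.image (v ∘ Fin.rev) Finset.univ = Finset.image v Finset.univ := by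
      intro v
      rw [← Finset.image_image]
      congr 1
      exact Finset.image_univ_of_surjective Fin.rev_surjective
    have c1 : (Finset.image (v₁ ∘ Fin.rev) Finset.univ).card = r := by
      rw [Finset.card_image_of_injective _ m₁.injective, Finset.card_univ, Fintype.card_fin]
    have e1 : (v₁ ∘ Fin.rev) = (Finset.image (v₁ ∘ Fin.rev) Finset.univ).orderEmbOfFin c1 :=
      Finset.orderEmbOfFin_unique c1
        (fun x => Finset.mem_image_of_mem _ (Finset.mem_univ x)) m₁
    have e2 : (v₂ ∘ Fin.rev) = (Finset.image (v₁ ∘ Fin.rev) Finset.univ).orderEmbOfFin c1 :=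
      Finset.orderEmbOfFin_unique c1
        (fun x => by
          rw [him v₁, he', ← him v₂]
          exact Finset.mem_image_of_mem _ (Finset.mem_univ x)) m₂
    have : v₁ ∘ Fin.rev = v₂ ∘ Fin.rev := e1.trans e2.symm
    funext k
    have := congrFun this (Fin.rev k)
    simpa [Fin.rev_rev] using this


set_option maxHeartbeats 2000000 in
open Classical in
/-- Hard-instance lower bound: for a tree on `n ≥ 2` vertices (`m = n - 1` edges),
`α = log(4m)`, bond dimension `r ≥ max{50, 1 + α}`, `ε ∈ (0, 1/√6]`, alphabet size
`d ≥ 2r - 1`, and the spiked distribution `p = (1 - 4ε²/m, 4ε²/(m(d-1)), …)`, every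
`N ≤ m r² / (400 α ε²)` has: the `p^{⊗N}`-probability that a random word of length `N` has no
strictly decreasing subsequence of length `r + 1` is at least `2^{-1/m}`. -/
theorem stmt2 (n r d N : ℕ) (hn : 2 ≤ n)
    (hr50 : 50 ≤ r) (hralpha : 1 + Real.log (4 * ((n : ℝ) - 1)) ≤ (r : ℝ))
    (ε : ℝ) (hε0 : 0 < ε) (hε1 : ε ≤ 1 / Real.sqrt 6)
    (hd : 2 * r - 1 ≤ d) (hN : 0 < N)
    (hNle : (N : ℝ) ≤ ((n : ℝ) - 1) * (r : ℝ) ^ 2 /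
        (400 * Real.log (4 * ((n : ℝ) - 1)) * ε ^ 2)) :
    (2 : ℝ) ^ (-(1 : ℝ) / ((n : ℝ) - 1)) ≤
      ∑ w : Fin N → Fin d,
        if ¬ ∃ f : Fin (r + 1) → Fin N, StrictMono f ∧ StrictAnti (w ∘ f) then
          ∏ i, (if (w i : ℕ) = 0 then 1 - 4 * ε ^ 2 / ((n : ℝ) - 1)
                else 4 * ε ^ 2 / (((n : ℝ) - 1) * ((d : ℝ) - 1)))
        else 0 := by
  classical
  -- basic quantities
  set m : ℝ := (n : ℝ) - 1 with hm_def
  have hm1 : (1:ℝ) ≤ m := by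
    have h2n : (2:ℝ) ≤ (n:ℝ) := by exact_mod_cast hn
    simp only [hm_def]; linarith
  have hm0 : (0:ℝ) < m := by linarith
  clear_value m
  set α : ℝ := Real.log (4 * m) with hα_def
  have hlog2 : (0.6931471803:ℝ) < Real.log 2 := Real.log_two_gt_d9
  have hlog4 : (1.386:ℝ) ≤ Real.log 4 := by
    have h4 : (4:ℝ) = 2^2 := by norm_num
    rw [h4, Real.log_pow]; push_cast; nlinarith
  have hα4 : Real.log 4 ≤ α := Real.log_le_log (by norm_num) (by nlinarith)
  have hα0 : (0:ℝ) < α := by linarith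
  clear_value α
  have hmne : m ≠ 0 := ne_of_gt hm0
  have hαne : α ≠ 0 := ne_of_gt hα0
  have hεne : ε ≠ 0 := ne_of_gt hε0
  have hε2 : ε^2 ≤ 1/6 := by
    have h60 : (0:ℝ) < Real.sqrt 6 := Real.sqrt_pos.2 (by norm_num)
    have hs : Real.sqrt 6 ^ 2 = 6 := Real.sq_sqrt (by norm_num)
    have := pow_le_pow_left₀ hε0.le hε1 2
    calc ε^2 ≤ (1 / Real.sqrt 6)^2 := this
      _ = 1/6 := by rw [div_pow, one_pow, hs]
  have hd99 : 99 ≤ d := by omega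
  have hdR : (99:ℝ) ≤ (d:ℝ) := by exact_mod_cast hd99
  have hdm1 : (0:ℝ) < (d:ℝ) - 1 := by linarith
  have hdne : ((d:ℝ) - 1) ≠ 0 := ne_of_gt hdm1
  have hdcast : ((d - 1 : ℕ) : ℝ) = (d:ℝ) - 1 := by
    rw [Nat.cast_sub (by omega), Nat.cast_one]
  haveI : NeZero d := ⟨by omega⟩
  -- the probability vector
  set q : ℝ := 4 * ε ^ 2 / (m * ((d : ℝ) - 1)) with hq_def
  set p : Fin d → ℝ := fun j => if (j : ℕ) = 0 then 1 - 4 * ε ^ 2 / m else q with hp_def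
  have hq0 : 0 ≤ q := by positivity
  have hone : 4 * ε^2 / m ≤ 1 := by
    rw [div_le_one hm0]; nlinarith
  have hpj : ∀ j, 0 ≤ p j := by
    intro j; simp only [hp_def]; split_ifs
    · linarith
    · exact hq0
  have hsum : ∑ j, p j = 1 := by
    rw [← Finset.add_sum_erase Finset.univ p (Finset.mem_univ (0 : Fin d))]
    have h0 : p 0 = 1 - 4 * ε ^ 2 / m := by simp [hp_def]
    have hrest : ∑ j ∈ Finset.univ.erase (0 : Fin d), p j = ((d:ℝ) - 1) * q := by
      have hpq : ∀ j ∈ Finset.univ.erase (0 : Fin d), p j = q := by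
        intro j hj
        have hj0 : j ≠ 0 := (Finset.mem_erase.1 hj).1
        have hv : (j : ℕ) ≠ 0 := fun h => hj0 (by apply Fin.ext; simp [h])
        rw [hp_def]; exact if_neg hv
      rw [Finset.sum_congr rfl hpq, Finset.sum_const,
        Finset.card_erase_of_mem (Finset.mem_univ _), Finset.card_univ, Fintype.card_fin,
        nsmul_eq_mul, hdcast]
    rw [h0, hrest, hq_def]
    field_simp
    ring
  have hP0 : ∀ w : Fin N → Fin d, 0 ≤ ∏ i, p (w i) :=
    fun w => Finset.prod_nonneg fun i _ => hpj _
  -- total mass is 1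
  have htot : ∑ w : Fin N → Fin d, ∏ i, p (w i) = 1 := by
    have hpi := Finset.sum_prod_piFinset (Finset.univ : Finset (Fin d))
      (fun (_ : Fin N) (j : Fin d) => p j)
    rw [Fintype.piFinset_univ] at hpi
    rw [hpi, Finset.prod_congr rfl (fun i _ => hsum), Finset.prod_const_one]
  -- notation for the bad event
  set bad : (Fin N → Fin d) → Prop :=
    fun w => ∃ f : Fin (r + 1) → Fin N, StrictMono f ∧ StrictAnti (w ∘ f) with hbad_def
  -- rewrite the goal in terms of p
  have hgoal_eq : (∑ w : Fin N → Fin d,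
      if ¬ bad w then
        ∏ i, (if (w i : ℕ) = 0 then 1 - 4 * ε ^ 2 / m
              else 4 * ε ^ 2 / (m * ((d : ℝ) - 1))) else 0)
      = ∑ w : Fin N → Fin d, if ¬ bad w then ∏ i, p (w i) else 0 := by
    refine Finset.sum_congr rfl fun w _ => ?_
    by_cases hw : bad w
    · simp [hw]
    · simp only [if_pos hw]; rfl
  rw [hgoal_eq]
  set S : ℝ := ∑ w : Fin N → Fin d, if ¬ bad w then ∏ i, p (w i) else 0 with hS_def
  set B : ℝ := ∑ w : Fin N → Fin d, if bad w then ∏ i, p (w i) else 0 with hB_def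
  have hSB : S + B = 1 := by
    rw [hS_def, hB_def, ← Finset.sum_add_distrib, ← htot]
    refine Finset.sum_congr rfl fun w _ => ?_
    by_cases hw : bad w <;> simp [hw]
  -- the union bound
  set SM : Finset (Fin r → Fin N) :=
    Finset.univ.filter (fun g : Fin r → Fin N => StrictMono g) with hSM_def
  set SA : Finset (Fin r → Fin d) :=
    Finset.univ.filter
      (fun v : Fin r → Fin d => StrictAnti v ∧ ∀ k, (v k : ℕ) ≠ 0) with hSA_def
  have step1 : ∀ w : Fin N → Fin d,
      (if bad w then ∏ i, p (w i) else 0) ≤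
        ∑ g ∈ SM, ∑ v ∈ SA, (if ∀ k, w (g k) = v k then ∏ i, p (w i) else 0) := by
    intro w
    have hnn : ∀ g ∈ SM, (0:ℝ) ≤
        ∑ v ∈ SA, (if ∀ k, w (g k) = v k then ∏ i, p (w i) else 0) := by
      intro g _
      refine Finset.sum_nonneg fun v _ => ?_
      split_ifs
      · exact hP0 w
      · exact le_refl 0
    by_cases hw : bad w
    · rw [if_pos hw]
      obtain ⟨f, hf, hanti⟩ := hw
      set g : Fin r → Fin N := fun k => f k.castSucc with hg_def
      set v : Fin r → Fin d := fun k => w (g k) with hv_def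
      have hgSM : g ∈ SM := by
        rw [hSM_def, Finset.mem_filter]
        exact ⟨Finset.mem_univ _, fun a b hab => hf (Fin.castSucc_lt_castSucc_iff.2 hab)⟩
      have hvSA : v ∈ SA := by
        rw [hSA_def, Finset.mem_filter]
        refine ⟨Finset.mem_univ _, fun a b hab =>
          hanti (Fin.castSucc_lt_castSucc_iff.2 hab), fun k => ?_⟩
        have hlt := hanti (Fin.castSucc_lt_last k)
        rw [Fin.lt_def] at hlt
        simp only [Function.comp_apply] at hlt
        show (w (f k.castSucc) : ℕ) ≠ 0
        omega
      have hinner : (∏ i, p (w i)) ≤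
          ∑ v' ∈ SA, (if ∀ k, w (g k) = v' k then ∏ i, p (w i) else 0) := by
        have h1 := Finset.single_le_sum
          (f := fun v' => if ∀ k, w (g k) = v' k then ∏ i, p (w i) else 0)
          (fun v' _ => by split_ifs; exacts [hP0 w, le_refl 0]) hvSA
        rwa [if_pos (fun k => rfl : ∀ k, w (g k) = v k)] at h1
      calc (∏ i, p (w i)) ≤
            ∑ v' ∈ SA, (if ∀ k, w (g k) = v' k then ∏ i, p (w i) else 0) := hinner
        _ ≤ _ := Finset.single_le_sum hnn hgSM
    · rw [if_neg hw]
      exact Finset.sum_nonneg hnn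
  have hginj : ∀ g ∈ SM, Function.Injective g := by
    intro g hg
    rw [hSM_def, Finset.mem_filter] at hg
    exact hg.2.injective
  have step2 : B ≤ (SM.card : ℝ) * SA.card * q ^ r := by
    calc B ≤ ∑ w : Fin N → Fin d,
          ∑ g ∈ SM, ∑ v ∈ SA, (if ∀ k, w (g k) = v k then ∏ i, p (w i) else 0) :=
        Finset.sum_le_sum fun w _ => step1 w
      _ = ∑ g ∈ SM, ∑ v ∈ SA,
          ∑ w : Fin N → Fin d, (if ∀ k, w (g k) = v k then ∏ i, p (w i) else 0) := by
        rw [Finset.sum_comm]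
        exact Finset.sum_congr rfl fun g _ => Finset.sum_comm
      _ = ∑ g ∈ SM, ∑ v ∈ SA, q ^ r := by
        refine Finset.sum_congr rfl fun g hg => Finset.sum_congr rfl fun v hv => ?_
        rw [marg_aux p hsum g (hginj g hg) v]
        rw [hSA_def, Finset.mem_filter] at hv
        have : ∀ k, p (v k) = q := fun k => by rw [hp_def]; exact if_neg (hv.2.2 k)
        rw [Finset.prod_congr rfl fun k _ => this k, Finset.prod_const,
          Finset.card_univ, Fintype.card_fin]
      _ = (SM.card : ℝ) * SA.card * q ^ r := by
        rw [Finset.sum_const, Finset.sum_const, nsmul_eq_mul, nsmul_eq_mul]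
        ring
  -- counting bounds
  have hSMcard : (SM.card : ℝ) ≤ (N.choose r : ℝ) := by exact_mod_cast card_SM_le r N
  have hSAcard : (SA.card : ℝ) ≤ ((d - 1).choose r : ℝ) := by
    exact Nat.cast_le.mpr (card_SA_le r d (by omega))
  set fr : ℝ := (r.factorial : ℝ) with hfr_def
  have hfr0 : (0:ℝ) < fr := by rw [hfr_def]; exact_mod_cast r.factorial_pos
  have h1 : (N.choose r : ℝ) * fr ≤ (N:ℝ)^r := by
    have hnat : (r.factorial * N.choose r : ℕ) ≤ N^r := by
      rw [← Nat.descFactorial_eq_factorial_mul_choose]; exact Nat.descFactorial_le_pow N r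
    calc (N.choose r : ℝ) * fr = ((r.factorial * N.choose r : ℕ) : ℝ) := by
          rw [hfr_def]; push_cast; ring
      _ ≤ ((N^r : ℕ) : ℝ) := by exact_mod_cast hnat
      _ = (N:ℝ)^r := by push_cast; ring
  have h2 : ((d - 1).choose r : ℝ) * fr ≤ ((d:ℝ) - 1)^r := by
    have hnat : (r.factorial * (d - 1).choose r : ℕ) ≤ (d - 1)^r := by
      rw [← Nat.descFactorial_eq_factorial_mul_choose]
      exact Nat.descFactorial_le_pow (d - 1) r
    calc ((d - 1).choose r : ℝ) * fr = (((r.factorial * (d - 1).choose r : ℕ)) : ℝ) := by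
          rw [hfr_def]; push_cast; ring
      _ ≤ (((d - 1)^r : ℕ) : ℝ) := by exact_mod_cast hnat
      _ = ((d:ℝ) - 1)^r := by rw [Nat.cast_pow, hdcast]
  have h3 : (r:ℝ)^r ≤ Real.exp 1 ^ r * fr := by
    have hsumexp := Real.sum_le_exp_of_nonneg (by positivity : (0:ℝ) ≤ (r:ℝ)) (r + 1)
    have hterm : (r:ℝ)^r / (r.factorial : ℝ) ≤ Real.exp (r:ℝ) :=
      le_trans (Finset.single_le_sum
        (f := fun i => (r:ℝ)^i / (i.factorial : ℝ))
        (fun i _ => by positivity) (Finset.self_mem_range_succ r)) hsumexp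
    have hexp : Real.exp (r:ℝ) = Real.exp 1 ^ r := by
      rw [← Real.exp_nat_mul]; simp
    rw [hexp, div_le_iff₀ hfr0] at hterm
    exact hterm
  -- the quantity X
  set X : ℝ := (N:ℝ) * (4 * ε^2) / m with hX_def
  have hX0 : (0:ℝ) ≤ X := by positivity
  have hXle : X ≤ (r:ℝ)^2 / (100*α) := by
    calc X = (4*ε^2/m) * (N:ℝ) := by rw [hX_def]; ring
      _ ≤ (4*ε^2/m) * (m * (r:ℝ)^2/(400*α*ε^2)) :=
        mul_le_mul_of_nonneg_left hNle (by positivity)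
      _ = (r:ℝ)^2/(100*α) := by
        field_simp
        ring
  have hq_prod : (N:ℝ) * ((d:ℝ)-1) * q = X := by
    rw [hq_def, hX_def]; field_simp
  have hBX : B * (fr * fr) ≤ X ^ r := by
    have hSM1 : (SM.card : ℝ) * fr ≤ (N:ℝ)^r :=
      le_trans (mul_le_mul_of_nonneg_right hSMcard hfr0.le) h1
    have hSA1 : (SA.card : ℝ) * fr ≤ ((d:ℝ)-1)^r :=
      le_trans (mul_le_mul_of_nonneg_right hSAcard hfr0.le) h2
    calc B * (fr*fr) ≤ ((SM.card:ℝ) * SA.card * q^r) * (fr*fr) :=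
          mul_le_mul_of_nonneg_right step2 (by positivity)
      _ = ((SM.card:ℝ)*fr) * ((SA.card:ℝ)*fr) * q^r := by ring
      _ ≤ ((N:ℝ)^r) * (((d:ℝ)-1)^r) * q^r := by
          refine mul_le_mul_of_nonneg_right ?_ (by positivity)
          exact mul_le_mul hSM1 hSA1 (by positivity) (by positivity)
      _ = X^r := by rw [← hq_prod, mul_pow, mul_pow]
  set β : ℝ := Real.exp 1^2/(100*α) with hβ_def
  have hβ0 : (0:ℝ) < β := by rw [hβ_def]; positivity
  have hXr : X^r ≤ β^r * (fr*fr) := by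
    calc X^r ≤ ((r:ℝ)^2/(100*α))^r := pow_le_pow_left₀ hX0 hXle r
      _ = ((r:ℝ)^r)^2 / ((100*α)^r) := by rw [div_pow, pow_right_comm]
      _ ≤ (Real.exp 1^r * fr)^2 / ((100*α)^r) := by
          apply div_le_div_of_nonneg_right ?_ (by positivity)
          exact pow_le_pow_left₀ (by positivity) h3 2
      _ = β^r * (fr*fr) := by
          rw [hβ_def, div_pow, mul_pow, ← pow_mul, ← pow_mul, Nat.mul_comm r 2]
          ring
  have hBY : B ≤ β^r := by
    have h := hBX.trans hXr
    exact le_of_mul_le_mul_right h (by positivity)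
  -- numerical bounds on β
  have he2 : Real.exp 1^2 < 7.39 := by
    have h := Real.exp_one_lt_d9
    have h2 : Real.exp 1^2 < 2.7182818286^2 :=
      pow_lt_pow_left₀ h (Real.exp_pos 1).le (by norm_num)
    have h3 : (2.7182818286:ℝ)^2 < 7.39 := by norm_num
    linarith
  have hβ10 : β ≤ 1/10 := by
    rw [hβ_def, div_le_div_iff₀ (by positivity) (by norm_num)]
    linarith only [he2, hα4, hlog4]
  have hβ1 : β ≤ 1 := hβ10.trans (by norm_num)
  have hlogβ : Real.log β ≤ -2 := by
    have h110 : (1:ℝ)/10 ≤ Real.exp (-2) := by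
      have hexp2 : Real.exp 2 ≤ 10 := by
        have he : Real.exp 2 = Real.exp 1 ^ 2 := by
          rw [← Real.exp_nat_mul]; norm_num
        linarith only [he, he2]
      calc (1:ℝ)/10 ≤ 1/Real.exp 2 :=
            one_div_le_one_div_of_le (Real.exp_pos 2) hexp2
        _ = Real.exp (-2) := by rw [Real.exp_neg, one_div]
    calc Real.log β ≤ Real.log (Real.exp (-2)) :=
          Real.log_le_log hβ0 (hβ10.trans h110)
      _ = -2 := Real.log_exp _
  have hexpα : Real.exp α = 4*m := by rw [hα_def]; exact Real.exp_log (by positivity)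
  have hβr : β^r ≤ 1/(160*m) := by
    have e1 : β^r = β^((r:ℕ):ℝ) := (Real.rpow_natCast β r).symm
    have e2 : β^((r:ℕ):ℝ) ≤ β^((1:ℝ)+α) :=
      Real.rpow_le_rpow_of_exponent_ge hβ0 hβ1 hralpha
    have e3 : β^((1:ℝ)+α) = β * Real.exp (Real.log β * α) := by
      rw [Real.rpow_add hβ0, Real.rpow_one, Real.rpow_def_of_pos hβ0]
    have e4 : Real.exp (Real.log β * α) ≤ Real.exp ((-2)*α) :=
      Real.exp_le_exp.2 (mul_le_mul_of_nonneg_right hlogβ hα0.le)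
    have e5 : Real.exp ((-2)*α) = 1/(16*m^2) := by
      have hh : (-2)*α = -(α+α) := by ring
      rw [hh, Real.exp_neg, Real.exp_add, hexpα]
      rw [inv_eq_one_div]
      congr 1
      ring
    have e6 : β^r ≤ β * (1/(16*m^2)) := by
      rw [e1]
      refine e2.trans (e3.le.trans ?_)
      rw [← e5]
      exact mul_le_mul_of_nonneg_left e4 hβ0.le
    have e7 : β * (1/(16*m^2)) ≤ (1/10) * (1/(16*m^2)) :=
      mul_le_mul_of_nonneg_right hβ10 (by positivity)
    have e8 : (1:ℝ)/10 * (1/(16*m^2)) ≤ 1/(160*m) := by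
      rw [div_mul_div_comm, one_mul]
      rw [div_le_div_iff₀ (by positivity) (by positivity)]
      linarith only [mul_le_mul_of_nonneg_left hm1 hm0.le]
    exact e6.trans (e7.trans e8)
  have hBfin : B ≤ 1/(160*m) := hBY.trans hβr
  -- final comparison
  have hrpow : (2:ℝ)^(-(1:ℝ)/m) ≤ 1 - 1/(160*m) := by
    have h2m : (2:ℝ)^(-(1:ℝ)/m) = Real.exp (-(Real.log 2 / m)) := by
      rw [Real.rpow_def_of_pos (by norm_num : (0:ℝ) < 2)]
      congr 1; ring
    have hpos : (0:ℝ) < 1 + Real.log 2/m := by positivity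
    have hexpge : 1 + Real.log 2/m ≤ Real.exp (Real.log 2/m) := by
      have h := Real.add_one_le_exp (Real.log 2/m); linarith only [h]
    have hinv : Real.exp (-(Real.log 2/m)) ≤ 1/(1 + Real.log 2/m) := by
      rw [Real.exp_neg, inv_eq_one_div]
      exact one_div_le_one_div_of_le hpos hexpge
    have hkey : (1:ℝ) ≤ (1 - 1/(160*m)) * (1 + Real.log 2/m) := by
      have expand : (1 - 1/(160*m)) * (1 + Real.log 2/m) - 1
          = (160*m*Real.log 2 - m - Real.log 2)/(160*m^2) := by
        field_simp
        ring
      have hnum : (0:ℝ) ≤ 160*m*Real.log 2 - m - Real.log 2 := by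
        have hprod : m * 0.6931471803 ≤ m * Real.log 2 :=
          mul_le_mul_of_nonneg_left hlog2.le hm0.le
        linarith only [hprod, hm1, Real.log_two_lt_d9]
      have : (0:ℝ) ≤ (160*m*Real.log 2 - m - Real.log 2)/(160*m^2) := by positivity
      linarith only [expand ▸ this]
    rw [h2m]
    refine hinv.trans ?_
    rw [div_le_iff₀ hpos]
    linarith only [hkey]
  linarith only [hrpow, hBfin, hSB]
end

section
/- There exist universal constants c₁ ∈ (0, 1/2] and c₂ > 0 with the following property. Let a < b < c be a three-letter ordered alphabet, let N ≥ 3 be an integer, let t ∈ [0, 1/3], and let x, y be reals with t ≤ y ≤ x ≤ (1 − y)/2. Consider the i.i.d. distribution on words of length N in which each letter independently equals a with probability 1 − x − y, equals b with probability x, and equals c with probability y. If N·t ≤ c₁, then the probability that the word contains c, b, a as a subsequence (i.e., there exist indices i < j < k with w_i = c, w_j = b, w_k = a) is at least N²t²/4 − c₂·t. -/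
open Finset

lemma card_band {N : ℕ} (a b : ℕ) (hbN : b ≤ N) :
    ((univ : Finset (Fin N)).filter fun i : Fin N => a ≤ i.val ∧ i.val < b).card = b - a := by
  have h1 : (Finset.Iio N).filter (fun v => a ≤ v ∧ v < b)
      = ((univ : Finset (Fin N)).filter fun i : Fin N => a ≤ i.val ∧ i.val < b).map
        Fin.valEmbedding := by
    rw [← Fin.map_valEmbedding_univ, Finset.filter_map]
    rfl
  have h2 := congrArg Finset.card h1
  rw [Finset.card_map] at h2
  rw [← h2]
  have : (Finset.Iio N).filter (fun v => a ≤ v ∧ v < b) = Finset.Ico a b := by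
    ext v
    simp only [Finset.mem_filter, Finset.mem_Iio, Finset.mem_Ico]
    omega
  rw [this, Nat.card_Ico]

lemma sum_ite_forall_prod {N : ℕ} (f : Fin 3 → ℝ) (S : Fin N → Finset (Fin 3)) :
    (∑ w : Fin N → Fin 3, if (∀ i, w i ∈ S i) then ∏ i, f (w i) else 0)
      = ∏ i, ∑ a ∈ S i, f a := by
  classical
  rw [Finset.prod_univ_sum]
  rw [← Finset.sum_filter]
  apply Finset.sum_congr
  · ext w
    simp [Fintype.mem_piFinset]
  · intros; rfl

lemma prod_threeblock {N : ℕ} (h : ℕ) (h2 : 2*h ≤ N) (c1 c2 c3 : ℝ) :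
    (∏ i : Fin N, (if i.val < h then c1 else if i.val < 2*h then c2 else c3))
      = c1^h * c2^h * c3^(N-2*h) := by
  classical
  rw [Finset.prod_ite, Finset.prod_ite, Finset.prod_const, Finset.prod_const,
    Finset.prod_const, Finset.filter_filter, Finset.filter_filter]
  have e0 : ((univ : Finset (Fin N)).filter fun i : Fin N => i.val < h)
      = (univ : Finset (Fin N)).filter fun i : Fin N => 0 ≤ i.val ∧ i.val < h := by
    ext i; simp
  have e1 : ((univ : Finset (Fin N)).filter fun i : Fin N => ¬ i.val < h ∧ i.val < 2*h)
      = (univ : Finset (Fin N)).filter fun i : Fin N => h ≤ i.val ∧ i.val < 2*h := by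
    ext i; simp
  have e2 : ((univ : Finset (Fin N)).filter fun i : Fin N => ¬ i.val < h ∧ ¬ i.val < 2*h)
      = (univ : Finset (Fin N)).filter fun i : Fin N => 2*h ≤ i.val ∧ i.val < N := by
    ext i; simp [i.isLt]; omega
  rw [e0, e1, e2, card_band 0 h (by omega), card_band h (2*h) h2,
    card_band (2*h) N le_rfl]
  have eh : 2*h - h = h := by omega
  rw [eh, Nat.sub_zero, mul_assoc]

lemma blockProb {N : ℕ} (h : ℕ) (h2 : 2*h ≤ N) (f : Fin 3 → ℝ)
    (U V W : Finset (Fin 3)) :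
    (∑ w : Fin N → Fin 3,
      if (∀ i : Fin N, w i ∈ (if i.val < h then U else if i.val < 2*h then V else W))
      then ∏ i, f (w i) else 0)
    = (∑ a ∈ U, f a)^h * (∑ a ∈ V, f a)^h * (∑ a ∈ W, f a)^(N-2*h) := by
  rw [sum_ite_forall_prod]
  rw [← prod_threeblock h h2]
  apply Finset.prod_congr rfl
  intro i _
  split_ifs <;> rfl

lemma threeblock_prob {N : ℕ} (h : ℕ) (h2 : 2*h ≤ N) (f : Fin 3 → ℝ)
    (hsum : f 0 + f 1 + f 2 = 1) :
    (∑ w : Fin N → Fin 3,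
      if (∃ i : Fin N, i.val < h ∧ w i = 2) ∧ (∃ j : Fin N, h ≤ j.val ∧ j.val < 2*h ∧ w j = 1)
         ∧ (∃ k : Fin N, 2*h ≤ k.val ∧ w k = 0)
      then ∏ i, f (w i) else 0)
    = (1 - (f 0 + f 1)^h) * (1 - (f 0 + f 2)^h) * (1 - (f 1 + f 2)^(N-2*h)) := by
  classical
  set A2 : Finset (Fin 3) := {0, 1} with hA2
  set A1 : Finset (Fin 3) := {0, 2} with hA1
  set A0 : Finset (Fin 3) := {1, 2} with hA0
  set Un : Finset (Fin 3) := Finset.univ with hUn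
  have m2 : ∀ v : Fin 3, v ∈ A2 ↔ ¬ v = 2 := by decide
  have m1 : ∀ v : Fin 3, v ∈ A1 ↔ ¬ v = 1 := by decide
  have m0 : ∀ v : Fin 3, v ∈ A0 ↔ ¬ v = 0 := by decide
  have memiff : ∀ (w : Fin N → Fin 3) (U V W : Finset (Fin 3)),
      ((∀ i : Fin N, i.val < h → w i ∈ U) ∧ (∀ i : Fin N, h ≤ i.val → i.val < 2*h → w i ∈ V)
        ∧ (∀ i : Fin N, 2*h ≤ i.val → w i ∈ W))
      ↔ (∀ i : Fin N, w i ∈ (if i.val < h then U else if i.val < 2*h then V else W)) := by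
    intro w U V W
    constructor
    · rintro ⟨a, b, c⟩ i
      split_ifs with g1 g2
      · exact a i g1
      · exact b i (by omega) g2
      · exact c i (by omega)
    · intro H
      refine ⟨fun i hi => ?_, fun i hi hi2 => ?_, fun i hi => ?_⟩ <;> have := H i
      · rwa [if_pos hi] at this
      · rw [if_neg (by omega), if_pos hi2] at this; exact this
      · rw [if_neg (by omega), if_neg (by omega)] at this; exact this
  -- the seven complementary conditions, as membership conditions
  have c1iff : ∀ w : Fin N → Fin 3, (¬ ∃ i : Fin N, i.val < h ∧ w i = 2)
      ↔ (∀ i : Fin N, w i ∈ (if i.val < h then A2 else if i.val < 2*h then Un else Un)) := by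
    intro w; rw [← memiff]; simp [m2, hUn]
  have c2iff : ∀ w : Fin N → Fin 3, (¬ ∃ j : Fin N, h ≤ j.val ∧ j.val < 2*h ∧ w j = 1)
      ↔ (∀ i : Fin N, w i ∈ (if i.val < h then Un else if i.val < 2*h then A1 else Un)) := by
    intro w; rw [← memiff]; simp [m1, hUn]
  have c3iff : ∀ w : Fin N → Fin 3, (¬ ∃ k : Fin N, 2*h ≤ k.val ∧ w k = 0)
      ↔ (∀ i : Fin N, w i ∈ (if i.val < h then Un else if i.val < 2*h then Un else A0)) := by
    intro w; rw [← memiff]; simp [m0, hUn]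
  have c12iff : ∀ w : Fin N → Fin 3,
      ((¬ ∃ i : Fin N, i.val < h ∧ w i = 2) ∧ (¬ ∃ j : Fin N, h ≤ j.val ∧ j.val < 2*h ∧ w j = 1))
      ↔ (∀ i : Fin N, w i ∈ (if i.val < h then A2 else if i.val < 2*h then A1 else Un)) := by
    intro w; rw [← memiff]; simp [m2, m1, hUn]
  have c13iff : ∀ w : Fin N → Fin 3,
      ((¬ ∃ i : Fin N, i.val < h ∧ w i = 2) ∧ (¬ ∃ k : Fin N, 2*h ≤ k.val ∧ w k = 0))
      ↔ (∀ i : Fin N, w i ∈ (if i.val < h then A2 else if i.val < 2*h then Un else A0)) := by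
    intro w; rw [← memiff]; simp [m2, m0, hUn]
  have c23iff : ∀ w : Fin N → Fin 3,
      ((¬ ∃ j : Fin N, h ≤ j.val ∧ j.val < 2*h ∧ w j = 1) ∧ (¬ ∃ k : Fin N, 2*h ≤ k.val ∧ w k = 0))
      ↔ (∀ i : Fin N, w i ∈ (if i.val < h then Un else if i.val < 2*h then A1 else A0)) := by
    intro w; rw [← memiff]; simp [m1, m0, hUn]
  have c123iff : ∀ w : Fin N → Fin 3,
      ((¬ ∃ i : Fin N, i.val < h ∧ w i = 2) ∧ (¬ ∃ j : Fin N, h ≤ j.val ∧ j.val < 2*h ∧ w j = 1)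
        ∧ (¬ ∃ k : Fin N, 2*h ≤ k.val ∧ w k = 0))
      ↔ (∀ i : Fin N, w i ∈ (if i.val < h then A2 else if i.val < 2*h then A1 else A0)) := by
    intro w; rw [← memiff]; simp [m2, m1, m0]
  have triviff : ∀ w : Fin N → Fin 3,
      True ↔ (∀ i : Fin N, w i ∈ (if i.val < h then Un else if i.val < 2*h then Un else Un)) := by
    intro w; simp [hUn]
  have ptw : ∀ w : Fin N → Fin 3,
      (if (∃ i : Fin N, i.val < h ∧ w i = 2) ∧ (∃ j : Fin N, h ≤ j.val ∧ j.val < 2*h ∧ w j = 1)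
         ∧ (∃ k : Fin N, 2*h ≤ k.val ∧ w k = 0)
       then ∏ i, f (w i) else 0)
      = (if (∀ i : Fin N, w i ∈ (if i.val < h then Un else if i.val < 2*h then Un else Un))
          then ∏ i, f (w i) else 0)
        - (if (∀ i : Fin N, w i ∈ (if i.val < h then A2 else if i.val < 2*h then Un else Un))
          then ∏ i, f (w i) else 0)
        - (if (∀ i : Fin N, w i ∈ (if i.val < h then Un else if i.val < 2*h then A1 else Un))
          then ∏ i, f (w i) else 0)
        - (if (∀ i : Fin N, w i ∈ (if i.val < h then Un else if i.val < 2*h then Un else A0))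
          then ∏ i, f (w i) else 0)
        + (if (∀ i : Fin N, w i ∈ (if i.val < h then A2 else if i.val < 2*h then A1 else Un))
          then ∏ i, f (w i) else 0)
        + (if (∀ i : Fin N, w i ∈ (if i.val < h then A2 else if i.val < 2*h then Un else A0))
          then ∏ i, f (w i) else 0)
        + (if (∀ i : Fin N, w i ∈ (if i.val < h then Un else if i.val < 2*h then A1 else A0))
          then ∏ i, f (w i) else 0)
        - (if (∀ i : Fin N, w i ∈ (if i.val < h then A2 else if i.val < 2*h then A1 else A0))
          then ∏ i, f (w i) else 0) := by
    intro w
    rw [← if_congr (triviff w) rfl rfl, ← if_congr (c1iff w) rfl rfl,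
      ← if_congr (c2iff w) rfl rfl, ← if_congr (c3iff w) rfl rfl,
      ← if_congr (c12iff w) rfl rfl, ← if_congr (c13iff w) rfl rfl,
      ← if_congr (c23iff w) rfl rfl, ← if_congr (c123iff w) rfl rfl]
    by_cases q1 : (∃ i : Fin N, i.val < h ∧ w i = 2) <;>
      by_cases q2 : (∃ j : Fin N, h ≤ j.val ∧ j.val < 2*h ∧ w j = 1) <;>
      by_cases q3 : (∃ k : Fin N, 2*h ≤ k.val ∧ w k = 0) <;>
      simp [q1, q2, q3]
  rw [Finset.sum_congr rfl (fun w _ => ptw w)]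
  simp only [Finset.sum_sub_distrib, Finset.sum_add_distrib]
  rw [blockProb h h2, blockProb h h2, blockProb h h2, blockProb h h2, blockProb h h2,
    blockProb h h2, blockProb h h2, blockProb h h2]
  have sUn : ∑ a ∈ Un, f a = 1 := by rw [hUn, Fin.sum_univ_three]; exact hsum
  have s2 : ∑ a ∈ A2, f a = f 0 + f 1 := by rw [hA2, Finset.sum_pair (by decide)]
  have s1 : ∑ a ∈ A1, f a = f 0 + f 2 := by rw [hA1, Finset.sum_pair (by decide)]
  have s0 : ∑ a ∈ A0, f a = f 1 + f 2 := by rw [hA0, Finset.sum_pair (by decide)]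
  rw [sUn, s2, s1, s0]
  ring

lemma word_prod {N : ℕ} (f : Fin 3 → ℝ) (i j : ℕ) (hi : i < N) (hj : j < N) (hij : i ≠ j) :
    (∏ k : Fin N, f (if k.val = i then 2 else if k.val = j then 1 else 0))
      = f 2 * f 1 * (f 0)^(N-2) := by
  classical
  set i0 : Fin N := ⟨i, hi⟩ with hi0
  set j0 : Fin N := ⟨j, hj⟩ with hj0
  rw [← Finset.mul_prod_erase univ _ (Finset.mem_univ i0)]
  have hj0mem : j0 ∈ univ.erase i0 := by
    rw [Finset.mem_erase]
    exact ⟨by simp [hi0, hj0, Fin.ext_iff, hij.symm], Finset.mem_univ _⟩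
  rw [← Finset.mul_prod_erase _ _ hj0mem]
  have e1 : f (if i0.val = i then 2 else if i0.val = j then 1 else 0) = f 2 := by
    rw [if_pos rfl]
  have e2 : f (if j0.val = i then 2 else if j0.val = j then 1 else 0) = f 1 := by
    rw [if_neg (by simpa [hj0] using hij.symm), if_pos rfl]
  rw [e1, e2]
  have e3 : ∏ k ∈ (univ.erase i0).erase j0,
      f (if k.val = i then 2 else if k.val = j then 1 else 0)
      = ∏ k ∈ (univ.erase i0).erase j0, f 0 := by
    apply Finset.prod_congr rfl
    intro k hk
    rw [Finset.mem_erase, Finset.mem_erase] at hk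
    rw [if_neg, if_neg]
    · intro hkj; exact hk.1 (Fin.ext hkj)
    · intro hki; exact hk.2.1 (Fin.ext hki)
  rw [e3, Finset.prod_const, Finset.card_erase_of_mem hj0mem,
    Finset.card_erase_of_mem (Finset.mem_univ _), Finset.card_univ, Fintype.card_fin]
  have hNN : N - 1 - 1 = N - 2 := by omega
  rw [hNN]
  ring

lemma caseA_sum {N : ℕ} (hN : 3 ≤ N) (f : Fin 3 → ℝ) (hf : ∀ a, 0 ≤ f a) :
    (∑ j ∈ Finset.range (N-1), (j:ℝ)) * (f 2 * f 1 * (f 0)^(N-2)) ≤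
      (∑ w : Fin N → Fin 3,
        if (∃ i j k : Fin N, i < j ∧ j < k ∧ w i = 2 ∧ w j = 1 ∧ w k = 0)
        then ∏ i, f (w i) else 0) := by
  classical
  set F : (Fin N → Fin 3) → ℝ := fun w => ∏ i, f (w i) with hF
  have hFnn : ∀ w, 0 ≤ F w := fun w => Finset.prod_nonneg (fun i _ => hf _)
  set S2 : Finset ((_ : ℕ) × ℕ) := (Finset.range (N-1)).sigma (fun j => Finset.range j) with hS2
  set Wd : (Σ _ : ℕ, ℕ) → (Fin N → Fin 3) := fun σ k =>
    if k.val = σ.2 then 2 else if k.val = σ.1 then 1 else 0 with hWd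
  have hmem : ∀ σ ∈ S2, σ.2 < σ.1 ∧ σ.1 < N - 1 := by
    rintro ⟨j, i⟩ hσ
    rw [hS2, Finset.mem_sigma, Finset.mem_range, Finset.mem_range] at hσ
    exact ⟨hσ.2, hσ.1⟩
  rw [← Finset.sum_filter]
  have hsub : S2.image Wd ⊆ univ.filter
      (fun w => ∃ i j k : Fin N, i < j ∧ j < k ∧ w i = 2 ∧ w j = 1 ∧ w k = 0) := by
    intro w hw
    rw [Finset.mem_image] at hw
    obtain ⟨σ, hσ, rfl⟩ := hw
    obtain ⟨h1, h2⟩ := hmem σ hσ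
    rw [Finset.mem_filter]
    refine ⟨Finset.mem_univ _, ⟨σ.2, by omega⟩, ⟨σ.1, by omega⟩, ⟨σ.1 + 1, by omega⟩,
      Fin.mk_lt_mk.mpr h1, Fin.mk_lt_mk.mpr (by omega), if_pos rfl, ?_, ?_⟩
    · show (if σ.1 = σ.2 then (2:Fin 3) else if σ.1 = σ.1 then 1 else 0) = 1
      rw [if_neg (by omega), if_pos rfl]
    · show (if σ.1 + 1 = σ.2 then (2:Fin 3) else if σ.1 + 1 = σ.1 then 1 else 0) = 0
      rw [if_neg (by omega), if_neg (by omega)]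
  have step1 : ∑ w ∈ S2.image Wd, F w ≤ ∑ w ∈ univ.filter
      (fun w => ∃ i j k : Fin N, i < j ∧ j < k ∧ w i = 2 ∧ w j = 1 ∧ w k = 0), F w :=
    Finset.sum_le_sum_of_subset_of_nonneg hsub (fun w _ _ => hFnn w)
  have hinj : ∀ σ ∈ S2, ∀ σ' ∈ S2, Wd σ = Wd σ' → σ = σ' := by
    rintro ⟨ja, ia⟩ ha ⟨jb, ib⟩ hb heq
    obtain ⟨ha1, ha2⟩ := hmem _ ha
    obtain ⟨hb1, hb2⟩ := hmem _ hb
    simp only at ha1 ha2 hb1 hb2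
    have e1 : (if ia = ib then (2:Fin 3) else if ia = jb then 1 else 0) = 2 := by
      have h := congrFun heq (⟨ia, by omega⟩ : Fin N)
      have l1 : Wd ⟨ja, ia⟩ (⟨ia, by omega⟩ : Fin N) = 2 := if_pos rfl
      exact (l1.symm.trans h).symm
    have e2 : (if ja = ib then (2:Fin 3) else if ja = jb then 1 else 0) = 1 := by
      have h := congrFun heq (⟨ja, by omega⟩ : Fin N)
      have l2 : Wd ⟨ja, ia⟩ (⟨ja, by omega⟩ : Fin N) = 1 := by
        show (if ja = ia then (2:Fin 3) else if ja = ja then 1 else 0) = 1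
        rw [if_neg (by omega), if_pos rfl]
      exact (l2.symm.trans h).symm
    have hia : ia = ib := by
      by_contra hne
      rw [if_neg hne] at e1
      split_ifs at e1 <;> exact absurd e1 (by decide)
    have hja : ja = jb := by
      rcases Decidable.eq_or_ne ja jb with h | hne
      · exact h
      · rw [if_neg hne] at e2
        split_ifs at e2 with hx
        · exact absurd e2 (by decide)
        · exact absurd e2 (by decide)
    subst hia; subst hja; rfl
  rw [Finset.sum_image hinj] at step1
  have hval : ∀ σ ∈ S2, F (Wd σ) = f 2 * f 1 * (f 0)^(N-2) := by
    intro σ hσ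
    obtain ⟨h1, h2⟩ := hmem σ hσ
    exact word_prod f σ.2 σ.1 (by omega) (by omega) (by omega)
  rw [Finset.sum_congr rfl hval, Finset.sum_const, nsmul_eq_mul] at step1
  have hcard : (S2.card : ℝ) = ∑ j ∈ Finset.range (N-1), (j:ℝ) := by
    rw [hS2, Finset.card_sigma]
    push_cast
    apply Finset.sum_congr rfl
    intro j _
    rw [Finset.card_range]
  rw [hcard] at step1
  exact step1

set_option maxHeartbeats 2000000 in
open Classical in
/-- Three-letter LDS lemma: there are universal constants `c₁ ∈ (0, 1/2]` and `c₂ > 0` such that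
for any `N ≥ 3`, `t ∈ [0, 1/3]`, and letter probabilities `(1-x-y, x, y)` with
`t ≤ y ≤ x ≤ (1-y)/2`, if `N·t ≤ c₁` then the probability that an i.i.d. word of length `N`
over the ordered alphabet `{a < b < c} = {0 < 1 < 2}` contains `c, b, a` as a subsequence is
at least `N²t²/4 - c₂·t`. -/
theorem stmt3 :
    ∃ c₁ c₂ : ℝ, 0 < c₁ ∧ c₁ ≤ 1 / 2 ∧ 0 < c₂ ∧
      ∀ (N : ℕ) (t x y : ℝ), 3 ≤ N → 0 ≤ t → t ≤ 1 / 3 →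
        t ≤ y → y ≤ x → x ≤ (1 - y) / 2 → (N : ℝ) * t ≤ c₁ →
        (N : ℝ) ^ 2 * t ^ 2 / 4 - c₂ * t ≤
          ∑ w : Fin N → Fin 3,
            if ∃ i j k : Fin N, i < j ∧ j < k ∧ w i = 2 ∧ w j = 1 ∧ w k = 0 then
              ∏ i, (![1 - x - y, x, y] : Fin 3 → ℝ) (w i)
            else 0 := by
  refine ⟨1/1000, 2, by norm_num, by norm_num, by norm_num, ?_⟩
  intro N t x y hN ht ht3 hty hyx hxy h1t
  have hNR : (3:ℝ) ≤ (N:ℝ) := by exact_mod_cast hN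
  have hy0 : 0 ≤ y := le_trans ht hty
  have hx0 : 0 ≤ x := le_trans hy0 hyx
  have hy3 : y ≤ 1/3 := by linarith
  have hq23 : x + y ≤ 2/3 := by linarith
  have hp0 : 0 ≤ 1 - x - y := by linarith
  set f : Fin 3 → ℝ := ![1 - x - y, x, y] with hf
  have hf0 : f 0 = 1 - x - y := rfl
  have hf1 : f 1 = x := rfl
  have hf2 : f 2 = y := rfl
  have hfnn : ∀ a : Fin 3, 0 ≤ f a := by
    intro a
    fin_cases a
    · exact hp0
    · exact hx0
    · exact hy0
  have hsum : f 0 + f 1 + f 2 = 1 := by rw [hf0, hf1, hf2]; ring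
  by_cases hcase : (N:ℝ) * (x+y) ≤ 1/4
  · -- Case A: small letter probabilities
    have key := caseA_sum hN f hfnn
    rw [hf0, hf1, hf2] at key
    have gauss : (∑ j ∈ Finset.range (N-1), (j:ℝ)) * 2 = ((N:ℝ)-1) * ((N:ℝ)-2) := by
      have g := Finset.sum_range_id_mul_two (N-1)
      have g' : (((∑ j ∈ Finset.range (N-1), j) * 2 : ℕ) : ℝ) = (((N-1) * (N-1-1) : ℕ) : ℝ) := by
        exact_mod_cast congrArg (fun n : ℕ => (n : ℝ)) g
      push_cast at g'
      rw [Nat.cast_sub (by omega : 1 ≤ N), Nat.cast_sub (by omega : 1 ≤ N - 1),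
        Nat.cast_sub (by omega : 1 ≤ N)] at g'
      push_cast at g'
      linarith [g']
    have hxy0 : 0 ≤ x + y := by linarith
    have bern : (3:ℝ)/4 ≤ (1 - x - y)^(N-2) := by
      have hb := one_add_mul_le_pow (show (-2:ℝ) ≤ -(x+y) by linarith) (N-2)
      have hc : ((N-2:ℕ):ℝ) ≤ (N:ℝ) := by exact_mod_cast Nat.sub_le N 2
      have hc2 : ((N-2:ℕ):ℝ) * (x+y) ≤ (N:ℝ) * (x+y) := mul_le_mul_of_nonneg_right hc hxy0
      have e : ((1:ℝ) + -(x+y))^(N-2) = (1 - x - y)^(N-2) := by ring_nf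
      rw [e] at hb
      nlinarith [hb, hcase]
    have hG : 0 ≤ ∑ j ∈ Finset.range (N-1), (j:ℝ) :=
      Finset.sum_nonneg fun j _ => Nat.cast_nonneg j
    have htt : t*t ≤ y*x := mul_le_mul hty (le_trans hty hyx) ht hy0
    have hyx0 : 0 ≤ y*x := mul_nonneg hy0 hx0
    have hv : t*t*(3/4) ≤ y * x * (1-x-y)^(N-2) :=
      mul_le_mul htt bern (by norm_num) hyx0
    have step : (∑ j ∈ Finset.range (N-1), (j:ℝ)) * (t*t*(3/4)) ≤
        (∑ j ∈ Finset.range (N-1), (j:ℝ)) * (y * x * (1-x-y)^(N-2)) :=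
      mul_le_mul_of_nonneg_left hv hG
    have final : (N:ℝ)^2 * t^2 / 4 - 2*t ≤
        (∑ j ∈ Finset.range (N-1), (j:ℝ)) * (t*t*(3/4)) := by
      have hNt2 : (N:ℝ)*t*t ≤ (1/1000)*t := mul_le_mul_of_nonneg_right h1t ht
      nlinarith [gauss, mul_nonneg ht ht, sq_nonneg ((N:ℝ)*t), hNt2,
        mul_le_mul_of_nonneg_right hNt2 ht]
    linarith [final, step, key]
  · -- Case B: letter probabilities not too small
    push_neg at hcase
    have hNx : 1/8 < (N:ℝ) * x := by nlinarith [hcase, mul_le_mul_of_nonneg_left hyx (by positivity : (0:ℝ) ≤ (N:ℝ))]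
    set h : ℕ := N / 3 with hh
    have h1 : 1 ≤ h := by omega
    have h2 : 2*h ≤ N := by omega
    have h32 : N ≤ 3*h + 2 := by omega
    -- numeric bounds
    have hH2 : 2*(h:ℝ) ≤ (N:ℝ) := by exact_mod_cast h2
    have hH32 : (N:ℝ) ≤ 3*(h:ℝ) + 2 := by exact_mod_cast h32
    have hH0 : (0:ℝ) ≤ (h:ℝ) := Nat.cast_nonneg h
    have hHN9 : (N:ℝ)/9 ≤ (h:ℝ) := by linarith
    have hHt1 : (h:ℝ)*t ≤ 1 := by nlinarith [mul_le_mul_of_nonneg_right (show (h:ℝ) ≤ (N:ℝ) by linarith) ht]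
    -- bound 1: 1 - (1-y)^h ≥ h*t/2
    have hb1 : (h:ℝ)*t/2 ≤ 1 - (1-y)^h := by
      have p1 : (0:ℝ) ≤ 1 - y := by linarith
      have bern1 : 1 + (h:ℝ)*y ≤ (1+y)^h := one_add_mul_le_pow (by linarith : (-2:ℝ) ≤ y) h
      have pa : (1-y)^h * (1 + (h:ℝ)*y) ≤ 1 := by
        calc (1-y)^h * (1 + (h:ℝ)*y) ≤ (1-y)^h * (1+y)^h :=
              mul_le_mul_of_nonneg_left bern1 (pow_nonneg p1 h)
          _ = ((1-y)*(1+y))^h := (mul_pow _ _ _).symm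
          _ ≤ 1 := pow_le_one₀ (by nlinarith) (by nlinarith)
      have ha0 : (0:ℝ) ≤ (1-y)^h := pow_nonneg p1 h
      have hty' : (h:ℝ)*t ≤ (h:ℝ)*y := mul_le_mul_of_nonneg_left hty hH0
      have pa' : (1-y)^h * (1 + (h:ℝ)*t) ≤ 1 := by
        calc (1-y)^h * (1 + (h:ℝ)*t) ≤ (1-y)^h * (1 + (h:ℝ)*y) := by nlinarith
          _ ≤ 1 := pa
      nlinarith [pa', mul_nonneg (mul_nonneg hH0 ht) (sub_nonneg.mpr hHt1), ha0,
        mul_nonneg hH0 ht]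
    -- bound 2: 1 - (1-x)^h ≥ 1/73
    have hb2 : 1/73 ≤ 1 - (1-x)^h := by
      have p1 : (0:ℝ) ≤ 1 - x := by linarith
      have bern1 : 1 + (h:ℝ)*x ≤ (1+x)^h := one_add_mul_le_pow (by linarith : (-2:ℝ) ≤ x) h
      have pa : (1-x)^h * (1 + (h:ℝ)*x) ≤ 1 := by
        calc (1-x)^h * (1 + (h:ℝ)*x) ≤ (1-x)^h * (1+x)^h :=
              mul_le_mul_of_nonneg_left bern1 (pow_nonneg p1 h)
          _ = ((1-x)*(1+x))^h := (mul_pow _ _ _).symm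
          _ ≤ 1 := pow_le_one₀ (by nlinarith) (by nlinarith)
      have ha0 : (0:ℝ) ≤ (1-x)^h := pow_nonneg p1 h
      have hHx : 1/72 ≤ (h:ℝ)*x := by nlinarith [hHN9, hNx, hx0]
      nlinarith [pa, ha0, mul_le_mul_of_nonneg_left hHx ha0]
    -- bound 3: 1 - (x+y)^(N-2h) ≥ 1/3
    have hb3 : 1/3 ≤ 1 - (x+y)^(N-2*h) := by
      have hm : N - 2*h ≠ 0 := by omega
      have : (x+y)^(N-2*h) ≤ x+y := pow_le_of_le_one (by linarith) (by linarith) hm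
      linarith
    have hA0 : (0:ℝ) ≤ (h:ℝ)*t/2 := by positivity
    have hAB : (h:ℝ)*t/2 * (1/73) ≤ (1 - (1-y)^h) * (1 - (1-x)^h) :=
      mul_le_mul hb1 hb2 (by norm_num) (by linarith)
    have hABC : (h:ℝ)*t/2 * (1/73) * (1/3) ≤
        (1 - (1-y)^h) * (1 - (1-x)^h) * (1 - (x+y)^(N-2*h)) :=
      mul_le_mul hAB hb3 (by norm_num) (by nlinarith [hb1, hb2, hA0])
    have key := threeblock_prob h h2 f hsum
    rw [hf0, hf1, hf2] at key
    rw [show (1 - x - y + x : ℝ) = 1 - y from by ring,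
      show (1 - x - y + y : ℝ) = 1 - x from by ring] at key
    have mono : (∑ w : Fin N → Fin 3,
        if (∃ i : Fin N, i.val < h ∧ w i = 2) ∧ (∃ j : Fin N, h ≤ j.val ∧ j.val < 2*h ∧ w j = 1)
           ∧ (∃ k : Fin N, 2*h ≤ k.val ∧ w k = 0)
        then ∏ i, f (w i) else 0) ≤
        (∑ w : Fin N → Fin 3,
          if ∃ i j k : Fin N, i < j ∧ j < k ∧ w i = 2 ∧ w j = 1 ∧ w k = 0
          then ∏ i, f (w i) else 0) := by
      apply Finset.sum_le_sum
      intro w _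
      by_cases hw : (∃ i : Fin N, i.val < h ∧ w i = 2)
          ∧ (∃ j : Fin N, h ≤ j.val ∧ j.val < 2*h ∧ w j = 1)
          ∧ (∃ k : Fin N, 2*h ≤ k.val ∧ w k = 0)
      · rw [if_pos hw]
        obtain ⟨⟨i, hi, hwi⟩, ⟨j, hj1, hj2, hwj⟩, ⟨k, hk, hwk⟩⟩ := hw
        rw [if_pos ⟨i, j, k, Fin.lt_def.mpr (by omega), Fin.lt_def.mpr (by omega), hwi, hwj, hwk⟩]
      · rw [if_neg hw]
        by_cases hw2 : ∃ i j k : Fin N, i < j ∧ j < k ∧ w i = 2 ∧ w j = 1 ∧ w k = 0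
        · rw [if_pos hw2]; exact Finset.prod_nonneg fun i _ => hfnn _
        · rw [if_neg hw2]
    have hNt0 : (0:ℝ) ≤ (N:ℝ)*t := by positivity
    have hfinal : (N:ℝ)^2 * t^2 / 4 - 2*t ≤ (h:ℝ)*t/2 * (1/73) * (1/3) := by
      have h1 : (N:ℝ)*t*((N:ℝ)*t) ≤ (1/1000)*((N:ℝ)*t) := mul_le_mul_of_nonneg_right h1t hNt0
      have h2' : (N:ℝ)/9*t ≤ (h:ℝ)*t := mul_le_mul_of_nonneg_right hHN9 ht
      nlinarith [h1, h2', ht, hNt0]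
    linarith [key, mono, hABC, hfinal]
end

section
/- Let a < b < c be a three-letter ordered alphabet, let N be a positive integer, let t ∈ [0, 1/3], and let x, y be reals with t ≤ y ≤ x ≤ (1 − y)/2. Let P(x, y) denote the probability, under the i.i.d. distribution on words of length N with letter probabilities p(a) = 1 − x − y, p(b) = x, p(c) = y, that the word contains c, b, a as a subsequence. Then P(x, y) ≥ P(t, t); that is, among all admissible (x, y), the probability is minimized by the choice x = y = t. -/
def hh : List ℝ → ℕ → ℝ
  | [], 0 => 1
  | [], _+1 => 0
  | _ :: _, 0 => 1
  | a :: l, n+1 => hh l (n+1) + a * hh (a :: l) n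

lemma hh_zero (l : List ℝ) : hh l 0 = 1 := by cases l <;> simp [hh]
lemma hh_nil (n : ℕ) : hh [] (n+1) = 0 := by simp [hh]
lemma hh_cons (a : ℝ) (l : List ℝ) (n : ℕ) :
    hh (a :: l) (n+1) = hh l (n+1) + a * hh (a :: l) n := by simp [hh]

lemma hh_nonneg (l : List ℝ) (h : ∀ a ∈ l, 0 ≤ a) : ∀ n, 0 ≤ hh l n := by
  induction l with
  | nil =>
    intro n; cases n with
    | zero => rw [hh_zero]; norm_num
    | succ n => rw [hh_nil]
  | cons a l ih =>
    have ha : 0 ≤ a := h a (by simp)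
    have hl : ∀ b ∈ l, 0 ≤ b := fun b hb => h b (by simp [hb])
    intro n
    induction n with
    | zero => rw [hh_zero]; norm_num
    | succ n ihn =>
      rw [hh_cons]
      have := mul_nonneg ha ihn
      have := ih hl (n+1)
      linarith

lemma hh_sub (a b : ℝ) (l : List ℝ) : ∀ n,
    hh (a :: l) (n+1) - hh (b :: l) (n+1) = (a - b) * hh (a :: b :: l) n := by
  intro n
  induction n with
  | zero => rw [hh_cons, hh_cons, hh_zero, hh_zero, hh_zero]; ring
  | succ n ih =>
    rw [hh_cons a l, hh_cons b l, hh_cons a (b :: l)]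
    linear_combination a * ih

lemma hh_comm12 (a b : ℝ) (l : List ℝ) : ∀ n, hh (a :: b :: l) n = hh (b :: a :: l) n := by
  intro n
  induction n with
  | zero => rw [hh_zero, hh_zero]
  | succ n ih =>
    rw [hh_cons a (b :: l), hh_cons b (a :: l)]
    linear_combination hh_sub b a l n + a * ih

lemma hh_comm23 (a b c : ℝ) (l : List ℝ) : ∀ n,
    hh (a :: b :: c :: l) n = hh (a :: c :: b :: l) n := by
  intro n
  induction n with
  | zero => rw [hh_zero, hh_zero]
  | succ n ih =>
    rw [hh_cons a (b :: c :: l), hh_cons a (c :: b :: l), hh_comm12 b c l]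
    linear_combination a * ih

lemma hh_comm34 (a b c d : ℝ) (l : List ℝ) : ∀ n,
    hh (a :: b :: c :: d :: l) n = hh (a :: b :: d :: c :: l) n := by
  intro n
  induction n with
  | zero => rw [hh_zero, hh_zero]
  | succ n ih =>
    rw [hh_cons a (b :: c :: d :: l), hh_cons a (b :: d :: c :: l), hh_comm23 b c d l]
    linear_combination a * ih

lemma hh_mono (a b : ℝ) (l : List ℝ) (hb : 0 ≤ b) (hba : b ≤ a) (hl : ∀ c ∈ l, 0 ≤ c) :
    ∀ n, hh (b :: l) n ≤ hh (a :: l) n := by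
  intro n
  cases n with
  | zero => rw [hh_zero, hh_zero]
  | succ n =>
    have h := hh_sub a b l n
    have h2 : 0 ≤ (a - b) * hh (a :: b :: l) n := by
      apply mul_nonneg (by linarith)
      apply hh_nonneg
      intro c hc
      simp only [List.mem_cons] at hc
      rcases hc with rfl | rfl | hc
      · linarith
      · exact hb
      · exact hl c hc
    linarith

lemma hh_one_cons : ∀ n, hh [1] n = 1 := by
  intro n
  induction n with
  | zero => rw [hh_zero]
  | succ n ih => rw [hh_cons, hh_nil, ih]; ring

lemma hh_geom (g : ℝ) : ∀ n, (1 - g) * hh [g, 1] n = 1 - g ^ (n+1) := by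
  intro n
  induction n with
  | zero => rw [hh_zero]; ring
  | succ n ih =>
    rw [hh_cons, hh_one_cons]
    linear_combination g * ih + (pow_succ g (n+1)).symm - g * (pow_succ g n).symm

lemma key_identity (A u v : ℝ) (n : ℕ) :
    (1-u)*(1-v)*hh [u,A,v,1] n
      = hh [1,A] (n+2) - hh [v,A] (n+2) - (1-v)*hh [u,A,v] (n+1) := by
  have p1 : hh ((1:ℝ) :: u :: A :: v :: []) n = hh [u,A,v,1] n := by
    rw [hh_comm12 1 u [A,v] n, hh_comm23 u 1 A [v] n, hh_comm34 u A 1 v [] n]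
  have s1 := hh_sub 1 u [A,v] n
  rw [p1] at s1
  have p2 : hh ((1:ℝ) :: v :: A :: []) (n+1) = hh [1,A,v] (n+1) := hh_comm23 1 v A [] (n+1)
  have s2 := hh_sub 1 v [A] (n+1)
  rw [p2] at s2
  linear_combination (v-1) * s1 - s2

lemma hh_move (A u v u' v' : ℝ) (n : ℕ)
    (hu' : 0 ≤ u') (hs : u' ≤ u) (hsum : u + v = u' + v') (hA : 0 ≤ A)
    (huv' : u ≤ v') (hu'v : u' ≤ v) (hv'1 : v' ≤ 1) :
    (1-u')*(1-v')*hh [u',A,v',1] n ≤ (1-u)*(1-v)*hh [u,A,v,1] n := by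
  have hv'def : v' = u + v - u' := by linarith
  subst hv'def
  have hu : 0 ≤ u := le_trans hu' hs
  have hv : 0 ≤ v := le_trans hu' hu'v
  have hv'0 : 0 ≤ u + v - u' := le_trans hu huv'
  have b1 := hh_sub (u+v-u') v [A] (n+1)
  have c1 := hh_sub u' u [A, u+v-u'] n
  have c2 := hh_sub (u+v-u') v [u,A] n
  have pc2a : hh ((u+v-u') :: u :: A :: []) (n+1) = hh [u,A,u+v-u'] (n+1) := by
    rw [hh_comm12 (u+v-u') u [A] (n+1), hh_comm23 u (u+v-u') A [] (n+1)]
  have pc2b : hh (v :: u :: A :: []) (n+1) = hh [u,A,v] (n+1) := by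
    rw [hh_comm12 v u [A] (n+1), hh_comm23 u v A [] (n+1)]
  rw [pc2a, pc2b] at c2
  have b2 := hh_sub (u+v-u') u [v,A] n
  have pb2 : hh (u :: v :: A :: []) (n+1) = hh [u,A,v] (n+1) := hh_comm23 u v A [] (n+1)
  rw [pb2] at b2
  have m1 : hh (u' :: u :: A :: (u+v-u') :: []) n ≤ hh (v :: u :: A :: (u+v-u') :: []) n := by
    apply hh_mono v u' [u,A,u+v-u'] hu' hu'v
    intro c hc
    simp only [List.mem_cons] at hc
    rcases hc with rfl | rfl | rfl | hc
    · exact hu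
    · exact hA
    · exact hv'0
    · simp at hc
  have pm : hh (v :: u :: A :: (u+v-u') :: []) n = hh ((u+v-u') :: v :: u :: A :: []) n := by
    rw [hh_comm12 (u+v-u') v [u,A] n, hh_comm23 v (u+v-u') u [A] n, hh_comm34 v u (u+v-u') A [] n]
  rw [pm] at m1
  have n1 : 0 ≤ hh ((u+v-u') :: u :: v :: A :: []) n := by
    apply hh_nonneg
    intro c hc; simp only [List.mem_cons] at hc
    rcases hc with rfl | rfl | rfl | rfl | hc
    · exact hv'0
    · exact hu
    · exact hv
    · exact hA
    · simp at hc
  have key1 := key_identity A u v n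
  have key2 := key_identity A u' (u+v-u') n
  have h1 : 0 ≤ (u-u') * (((u+v-u')-u) * hh ((u+v-u') :: u :: v :: A :: []) n) := by
    apply mul_nonneg (by linarith)
    exact mul_nonneg (by linarith) n1
  have h2 : 0 ≤ (u-u') * ((1-(u+v-u')) * (hh ((u+v-u') :: v :: u :: A :: []) n - hh (u' :: u :: A :: (u+v-u') :: []) n)) := by
    apply mul_nonneg (by linarith)
    exact mul_nonneg (by linarith) (by linarith)
  have G_eq : (1-u)*(1-v)*hh [u,A,v,1] n - (1-u')*(1-(u+v-u'))*hh [u',A,u+v-u',1] n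
      = (u-u') * (((u+v-u')-u) * hh ((u+v-u') :: u :: v :: A :: []) n)
        + (u-u') * ((1-(u+v-u')) * (hh ((u+v-u') :: v :: u :: A :: []) n - hh (u' :: u :: A :: (u+v-u') :: []) n)) := by
    linear_combination key1 - key2 + b1 + (1-(u+v-u'))*c1 + (1-(u+v-u'))*c2 + (u-u')*b2
  linarith [G_eq, h1, h2]

open Classical in
/-- The probability that an i.i.d. word of length `N` over the ordered alphabet
`{a < b < c} = {0 < 1 < 2}` with letter probabilities `(1 - x - y, x, y)` contains
`c, b, a` as a subsequence. -/
noncomputable def subseqProb (N : ℕ) (x y : ℝ) : ℝ :=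
  ∑ w : Fin N → Fin 3,
    if ∃ i j k : Fin N, i < j ∧ j < k ∧ w i = 2 ∧ w j = 1 ∧ w k = 0 then
      ∏ i, (![1 - x - y, x, y] : Fin 3 → ℝ) (w i)
    else 0

def C0 {n : ℕ} (w : Fin n → Fin 3) : Prop := ∃ k, w k = 0
def C1 {n : ℕ} (w : Fin n → Fin 3) : Prop := ∃ j k : Fin n, j < k ∧ w j = 1 ∧ w k = 0
def C2 {n : ℕ} (w : Fin n → Fin 3) : Prop :=
  ∃ i j k : Fin n, i < j ∧ j < k ∧ w i = 2 ∧ w j = 1 ∧ w k = 0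

lemma C1_C0 {n : ℕ} {w : Fin n → Fin 3} (h : C1 w) : C0 w := by
  obtain ⟨j, k, _, _, hk⟩ := h; exact ⟨k, hk⟩

lemma C2_C1 {n : ℕ} {w : Fin n → Fin 3} (h : C2 w) : C1 w := by
  obtain ⟨i, j, k, _, h2, _, h4, h5⟩ := h; exact ⟨j, k, h2, h4, h5⟩

lemma C0_cons {n : ℕ} (c : Fin 3) (w : Fin n → Fin 3) :
    C0 (Fin.cons c w) ↔ c = 0 ∨ C0 w := by
  constructor
  · rintro ⟨k, hk⟩
    rcases Fin.eq_zero_or_eq_succ k with rfl | ⟨k', rfl⟩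
    · left; rwa [Fin.cons_zero] at hk
    · right; exact ⟨k', by rwa [Fin.cons_succ] at hk⟩
  · rintro (rfl | ⟨k, hk⟩)
    · exact ⟨0, Fin.cons_zero _ _⟩
    · exact ⟨k.succ, by rwa [Fin.cons_succ]⟩

lemma C1_cons {n : ℕ} (c : Fin 3) (w : Fin n → Fin 3) :
    C1 (Fin.cons c w) ↔ (c = 1 ∧ C0 w) ∨ C1 w := by
  constructor
  · rintro ⟨j, k, hjk, hj, hk⟩
    have hk0 : k ≠ 0 := Fin.pos_iff_ne_zero.mp (lt_of_le_of_lt (Fin.zero_le _) hjk)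
    obtain ⟨k', rfl⟩ := Fin.eq_succ_of_ne_zero hk0
    rcases Fin.eq_zero_or_eq_succ j with rfl | ⟨j', rfl⟩
    · left
      rw [Fin.cons_zero] at hj
      exact ⟨hj, ⟨k', by rwa [Fin.cons_succ] at hk⟩⟩
    · right
      exact ⟨j', k', by simpa using hjk, by rwa [Fin.cons_succ] at hj,
        by rwa [Fin.cons_succ] at hk⟩
  · rintro (⟨rfl, k, hk⟩ | ⟨j, k, hjk, hj, hk⟩)
    · exact ⟨0, k.succ, Fin.succ_pos k, Fin.cons_zero _ _, by rwa [Fin.cons_succ]⟩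
    · exact ⟨j.succ, k.succ, by simpa using hjk, by rwa [Fin.cons_succ],
        by rwa [Fin.cons_succ]⟩

lemma C2_cons {n : ℕ} (c : Fin 3) (w : Fin n → Fin 3) :
    C2 (Fin.cons c w) ↔ (c = 2 ∧ C1 w) ∨ C2 w := by
  constructor
  · rintro ⟨i, j, k, hij, hjk, hi, hj, hk⟩
    have hj0 : j ≠ 0 := Fin.pos_iff_ne_zero.mp (lt_of_le_of_lt (Fin.zero_le _) hij)
    obtain ⟨j', rfl⟩ := Fin.eq_succ_of_ne_zero hj0
    have hk0 : k ≠ 0 := Fin.pos_iff_ne_zero.mp (lt_of_le_of_lt (Fin.zero_le _) hjk)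
    obtain ⟨k', rfl⟩ := Fin.eq_succ_of_ne_zero hk0
    rcases Fin.eq_zero_or_eq_succ i with rfl | ⟨i', rfl⟩
    · left
      rw [Fin.cons_zero] at hi
      exact ⟨hi, ⟨j', k', by simpa using hjk, by rwa [Fin.cons_succ] at hj,
        by rwa [Fin.cons_succ] at hk⟩⟩
    · right
      exact ⟨i', j', k', by simpa using hij, by simpa using hjk,
        by rwa [Fin.cons_succ] at hi, by rwa [Fin.cons_succ] at hj,
        by rwa [Fin.cons_succ] at hk⟩
  · rintro (⟨rfl, j, k, hjk, hj, hk⟩ | ⟨i, j, k, hij, hjk, hi, hj, hk⟩)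
    · exact ⟨0, j.succ, k.succ, Fin.succ_pos j, by simpa using hjk, Fin.cons_zero _ _,
        by rwa [Fin.cons_succ], by rwa [Fin.cons_succ]⟩
    · exact ⟨i.succ, j.succ, k.succ, by simpa using hij, by simpa using hjk,
        by rwa [Fin.cons_succ], by rwa [Fin.cons_succ], by rwa [Fin.cons_succ]⟩

open Classical in
noncomputable def S0 (n : ℕ) (x y : ℝ) : ℝ :=
  ∑ w : Fin n → Fin 3,
    if C0 w then ∏ i, (![1 - x - y, x, y] : Fin 3 → ℝ) (w i) else 0

open Classical in
noncomputable def S1 (n : ℕ) (x y : ℝ) : ℝ :=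
  ∑ w : Fin n → Fin 3,
    if C1 w then ∏ i, (![1 - x - y, x, y] : Fin 3 → ℝ) (w i) else 0

open Classical in
noncomputable def S2 (n : ℕ) (x y : ℝ) : ℝ :=
  ∑ w : Fin n → Fin 3,
    if C2 w then ∏ i, (![1 - x - y, x, y] : Fin 3 → ℝ) (w i) else 0

lemma sum_pi_cons (n : ℕ) (f : (Fin (n+1) → Fin 3) → ℝ) :
    ∑ w : Fin (n+1) → Fin 3, f w = ∑ c : Fin 3, ∑ w : Fin n → Fin 3, f (Fin.cons c w) := by
  rw [← ((Fin.consEquiv (fun _ : Fin (n+1) => Fin 3))).sum_comp f, Fintype.sum_prod_type]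
  rfl

lemma prod_cons (n : ℕ) (p : Fin 3 → ℝ) (c : Fin 3) (w : Fin n → Fin 3) :
    ∏ i : Fin (n+1), p (Fin.cons (α := fun _ => Fin 3) c w i) = p c * ∏ i : Fin n, p (w i) := by
  rw [Fin.prod_univ_succ]
  simp

open Classical in
lemma sum_ite_mul {α : Type*} [Fintype α] (P : α → Prop) (a : ℝ) (f : α → ℝ) :
    ∑ w : α, (if P w then a * f w else 0) = a * ∑ w : α, (if P w then f w else 0) := by
  rw [Finset.mul_sum]
  apply Finset.sum_congr rfl
  intro w _
  split <;> simp

lemma sum_prod_one (x y : ℝ) : ∀ n : ℕ,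
    ∑ w : Fin n → Fin 3, ∏ i, (![1 - x - y, x, y] : Fin 3 → ℝ) (w i) = 1 := by
  intro n
  induction n with
  | zero => simp
  | succ n ih =>
    rw [sum_pi_cons n (fun w => ∏ i, (![1 - x - y, x, y] : Fin 3 → ℝ) (w i))]
    simp only [prod_cons]
    rw [Fin.sum_univ_three, ← Finset.mul_sum, ← Finset.mul_sum, ← Finset.mul_sum, ih]
    simp [Matrix.cons_val_zero, Matrix.cons_val_one, Matrix.head_cons]
    ring

open Classical in
lemma S0_succ (n : ℕ) (x y : ℝ) :
    S0 (n+1) x y = (1-x-y) + x * S0 n x y + y * S0 n x y := by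
  simp only [S0]
  rw [sum_pi_cons n (fun w => if C0 w then ∏ i, (![1 - x - y, x, y] : Fin 3 → ℝ) (w i) else 0)]
  simp only [C0_cons, prod_cons, Fin.sum_univ_three]
  have h0 : ∀ w : Fin n → Fin 3, ((0:Fin 3) = 0 ∨ C0 w) ↔ True := by simp
  have h1 : ∀ w : Fin n → Fin 3, ((1:Fin 3) = 0 ∨ C0 w) ↔ C0 w := by
    intro w; simp [show (1:Fin 3) ≠ 0 by decide]
  have h2 : ∀ w : Fin n → Fin 3, ((2:Fin 3) = 0 ∨ C0 w) ↔ C0 w := by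
    intro w; simp [show (2:Fin 3) ≠ 0 by decide]
  simp only [h0, h1, h2, true_or, if_true]
  rw [sum_ite_mul, sum_ite_mul, ← Finset.mul_sum, sum_prod_one]
  simp only [Matrix.cons_val_zero, Matrix.cons_val_one, Matrix.head_cons,
    Matrix.cons_val_two, Matrix.tail_cons, mul_one]

open Classical in
lemma S1_succ (n : ℕ) (x y : ℝ) :
    S1 (n+1) x y = (1-x-y) * S1 n x y + x * S0 n x y + y * S1 n x y := by
  simp only [S1, S0]
  rw [sum_pi_cons n (fun w => if C1 w then ∏ i, (![1 - x - y, x, y] : Fin 3 → ℝ) (w i) else 0)]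
  simp only [C1_cons, prod_cons, Fin.sum_univ_three]
  have h0 : ∀ w : Fin n → Fin 3, (((0:Fin 3) = 1 ∧ C0 w) ∨ C1 w) ↔ C1 w := by
    intro w
    simp [show (0:Fin 3) ≠ 1 by decide]
  have h1 : ∀ w : Fin n → Fin 3, (C0 w ∨ C1 w) ↔ C0 w := by
    intro w
    exact ⟨fun h => h.elim id C1_C0, Or.inl⟩
  have h2 : ∀ w : Fin n → Fin 3, (((2:Fin 3) = 1 ∧ C0 w) ∨ C1 w) ↔ C1 w := by
    intro w
    simp [show (2:Fin 3) ≠ 1 by decide]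
  simp only [h0, h1, h2, true_and]
  rw [sum_ite_mul, sum_ite_mul, sum_ite_mul]
  simp only [Matrix.cons_val_zero, Matrix.cons_val_one, Matrix.head_cons,
    Matrix.cons_val_two, Matrix.tail_cons]

open Classical in
lemma S2_succ (n : ℕ) (x y : ℝ) :
    S2 (n+1) x y = (1-x-y) * S2 n x y + x * S2 n x y + y * S1 n x y := by
  simp only [S2, S1]
  rw [sum_pi_cons n (fun w => if C2 w then ∏ i, (![1 - x - y, x, y] : Fin 3 → ℝ) (w i) else 0)]
  simp only [C2_cons, prod_cons, Fin.sum_univ_three]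
  have h0 : ∀ w : Fin n → Fin 3, (((0:Fin 3) = 2 ∧ C1 w) ∨ C2 w) ↔ C2 w := by
    intro w
    simp [show (0:Fin 3) ≠ 2 by decide]
  have h1 : ∀ w : Fin n → Fin 3, (((1:Fin 3) = 2 ∧ C1 w) ∨ C2 w) ↔ C2 w := by
    intro w
    simp [show (1:Fin 3) ≠ 2 by decide]
  have h2 : ∀ w : Fin n → Fin 3, (C1 w ∨ C2 w) ↔ C1 w := by
    intro w
    exact ⟨fun h => h.elim id C2_C1, Or.inl⟩
  simp only [h0, h1, h2, true_and]
  rw [sum_ite_mul, sum_ite_mul, sum_ite_mul]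
  simp only [Matrix.cons_val_zero, Matrix.cons_val_one, Matrix.head_cons,
    Matrix.cons_val_two, Matrix.tail_cons]

lemma S0_zero (x y : ℝ) : S0 0 x y = 0 := by
  simp [S0, C0]

lemma S1_zero (x y : ℝ) : S1 0 x y = 0 := by
  simp [S1, C1]

lemma S2_zero (x y : ℝ) : S2 0 x y = 0 := by
  simp [S2, C2]

lemma S0_closed (x y : ℝ) : ∀ n : ℕ, S0 n x y = 1 - (x+y)^n := by
  intro n
  induction n with
  | zero => rw [S0_zero]; norm_num
  | succ n ih =>
    rw [S0_succ, ih]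
    ring

lemma S1_one (x y : ℝ) : S1 1 x y = 0 := by
  rw [S1_succ, S0_zero, S1_zero]; ring

lemma S1_closed (x y : ℝ) : ∀ n : ℕ, S1 (n+2) x y = x*(1-x-y)*hh [1-x, x+y, 1] n := by
  intro n
  induction n with
  | zero =>
    rw [show (0+2 : ℕ) = 1+1 from rfl, S1_succ, S1_one, S0_closed, hh_zero]
    ring
  | succ n ih =>
    rw [show (n+1+2 : ℕ) = (n+2)+1 from rfl, S1_succ, ih, S0_closed,
      hh_cons (1-x) [x+y, 1] n]
    linear_combination (-x) * (hh_geom (x+y) (n+1))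

lemma S2_one (x y : ℝ) : S2 1 x y = 0 := by
  rw [S2_succ, S2_zero, S1_zero]; ring

lemma S2_two (x y : ℝ) : S2 2 x y = 0 := by
  rw [show (2:ℕ) = 1+1 from rfl, S2_succ, S2_one, S1_one]; ring

lemma S2_closed (x y : ℝ) : ∀ n : ℕ,
    S2 (n+3) x y = x*y*(1-x-y)*hh [1-y, 1-x, x+y, 1] n := by
  intro n
  induction n with
  | zero =>
    rw [show (0+3 : ℕ) = 2+1 from rfl, S2_succ, S2_two, S1_closed, hh_zero, hh_zero]
    ring
  | succ n ih =>
    rw [show (n+1+3 : ℕ) = (n+3)+1 from rfl, S2_succ, ih,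
      show (n+3 : ℕ) = (n+1)+2 from rfl, S1_closed,
      hh_cons (1-y) [1-x, x+y, 1] n]
    ring

open Classical in
lemma subseq_eq (N : ℕ) (x y : ℝ) : subseqProb N x y = S2 N x y := by
  rw [subseqProb, S2]
  apply Finset.sum_congr rfl
  intro w _
  exact if_congr Iff.rfl rfl rfl

/-- Among all admissible letter probabilities `(1-x-y, x, y)` with `t ≤ y ≤ x ≤ (1-y)/2`,
the probability of containing `c, b, a` as a subsequence is minimized at `x = y = t`. -/
theorem stmt4 (N : ℕ) (hN : 0 < N) (t x y : ℝ) (ht0 : 0 ≤ t) (ht1 : t ≤ 1 / 3)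
    (hty : t ≤ y) (hyx : y ≤ x) (hx : x ≤ (1 - y) / 2) :
    subseqProb N t t ≤ subseqProb N x y := by
  have hy0 : 0 ≤ y := le_trans ht0 hty
  have hx0 : 0 ≤ x := le_trans hy0 hyx
  have hy13 : y ≤ 1/3 := by linarith
  have hx12 : x ≤ 1/2 := by linarith
  have hxy23 : x + y ≤ 2/3 := by linarith
  rcases N with _ | _ | _ | m
  · rw [subseq_eq, subseq_eq, S2_zero, S2_zero]
  · rw [subseq_eq, subseq_eq, S2_one, S2_one]
  · rw [subseq_eq, subseq_eq, S2_two, S2_two]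
  · rw [subseq_eq, subseq_eq, show (m+1+1+1 : ℕ) = m+3 from rfl, S2_closed, S2_closed]
    have e_t : t*t*(1-t-t)*hh [1-t, 1-t, t+t, 1] m
        = t * ((1-(t+t))*(1-(1-t))*hh [t+t, 1-t, 1-t, 1] m) := by
      rw [hh_comm23 (1-t) (1-t) (t+t) [1] m, hh_comm12 (1-t) (t+t) [1-t, 1] m]
      ring
    have e_xy : x*y*(1-x-y)*hh [1-y, 1-x, x+y, 1] m
        = x * ((1-(x+y))*(1-(1-y))*hh [x+y, 1-x, 1-y, 1] m) := by
      rw [hh_comm12 (1-y) (1-x) [x+y, 1] m, hh_comm23 (1-x) (1-y) (x+y) [1] m,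
        hh_comm12 (1-x) (x+y) [1-y, 1] m]
      ring
    have e_mid : t * ((1-(x+t))*(1-(1-x))*hh [x+t, 1-t, 1-x, 1] m)
        = x * ((1-(x+t))*(1-(1-t))*hh [x+t, 1-x, 1-t, 1] m) := by
      rw [hh_comm23 (x+t) (1-t) (1-x) [1] m]
      ring
    have move2 := hh_move (1-t) (x+t) (1-x) (t+t) (1-t) m
      (by linarith) (by linarith) (by ring) (by linarith)
      (by linarith) (by linarith) (by linarith)
    have move1 := hh_move (1-x) (x+y) (1-y) (x+t) (1-t) m
      (by linarith) (by linarith) (by ring) (by linarith)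
      (by linarith) (by linarith) (by linarith)
    calc t*t*(1-t-t)*hh [1-t, 1-t, t+t, 1] m
        = t * ((1-(t+t))*(1-(1-t))*hh [t+t, 1-t, 1-t, 1] m) := e_t
      _ ≤ t * ((1-(x+t))*(1-(1-x))*hh [x+t, 1-t, 1-x, 1] m) :=
          mul_le_mul_of_nonneg_left move2 ht0
      _ = x * ((1-(x+t))*(1-(1-t))*hh [x+t, 1-x, 1-t, 1] m) := e_mid
      _ ≤ x * ((1-(x+y))*(1-(1-y))*hh [x+y, 1-x, 1-y, 1] m) :=
          mul_le_mul_of_nonneg_left move1 hx0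
      _ = x*y*(1-x-y)*hh [1-y, 1-x, x+y, 1] m := e_xy.symm
end

section
/- Let N, j, i be natural numbers with 2j ≤ N. Consider semistandard Young tableaux of shape (N − j, j) with entries in the three-letter totally ordered alphabet {0, 1, 2} (rows weakly increasing left to right, columns strictly increasing top to bottom). If i ≤ j, then the number of such tableaux having exactly i entries equal to 0 is (i + 1)(N − 2j + 1). If j < i ≤ N − j, then the number of such tableaux having exactly i entries equal to 0 is (j + 1)(N − i − j + 1). -/
/-- The two-row Young diagram of shape `(N - j, j)` (one row if `j = 0`). -/
def twoRowDiagram (N j : ℕ) (h : 2 * j ≤ N) : YoungDiagram :=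
  YoungDiagram.ofRowLens [N - j, j] (by
    simp [List.sortedGE_iff_pairwise]
    omega)

namespace Stmt5Aux

lemma mem_twoRow {N j : ℕ} (h : 2 * j ≤ N) (r k : ℕ) :
    (r, k) ∈ twoRowDiagram N j h ↔ (r = 0 ∧ k < N - j) ∨ (r = 1 ∧ k < j) := by
  rw [twoRowDiagram, YoungDiagram.mem_ofRowLens]
  constructor
  · rintro ⟨h1, h2⟩
    simp at h1
    interval_cases r <;> simp_all
  · rintro (⟨rfl, hk⟩ | ⟨rfl, hk⟩) <;> exact ⟨by simp, by simpa⟩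

/-- entry function -/
def ent (Nj jl a b d : ℕ) (r k : ℕ) : ℕ :=
  if r = 0 then (if k < a then 0 else if k < a + b then 1 else if k < Nj then 2 else 0)
  else if r = 1 then (if k < d then 1 else if k < jl then 2 else 0)
  else 0

def mkT (N j : ℕ) (h : 2 * j ≤ N) (a b d : ℕ) (hab : a + b ≤ N - j) (hd : d ≤ j)
    (hjab : j ≤ a + b) (hda : a < j → d ≤ a) :
    SemistandardYoungTableau (twoRowDiagram N j h) where
  entry := ent (N - j) j a b d
  row_weak' := by
    intro r k1 k2 hk hm
    rw [mem_twoRow] at hm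
    rcases hm with ⟨rfl, hk2⟩ | ⟨rfl, hk2⟩ <;> simp only [ent] <;> split_ifs <;>
      first | exact ‹False›.elim | omega
  col_strict' := by
    intro r1 r2 k hr hm
    rw [mem_twoRow] at hm
    rcases hm with ⟨rfl, hk⟩ | ⟨rfl, hk⟩
    · omega
    · have hr1 : r1 = 0 := by omega
      subst hr1
      have hda' : d ≤ a ∨ j ≤ a := by
        rcases Nat.lt_or_ge a j with h' | h'
        · exact Or.inl (hda h')
        · exact Or.inr h'
      simp only [ent]
      split_ifs <;> first | exact ‹False›.elim | omega
  zeros' := by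
    intro r k hm
    rw [mem_twoRow] at hm
    rcases r with _ | _ | r
    · have hk : ¬ k < N - j := fun hk => hm (Or.inl ⟨rfl, hk⟩)
      simp only [ent]
      split_ifs <;> first | exact ‹False›.elim | omega
    · have hk : ¬ k < j := fun hk => hm (Or.inr ⟨rfl, hk⟩)
      simp only [ent]
      split_ifs <;> first | exact ‹False›.elim | omega
    · simp only [ent]
      split_ifs <;> first | exact ‹False›.elim | omega

@[simp] lemma mkT_apply (N j : ℕ) (h : 2 * j ≤ N) (a b d : ℕ) (hab : a + b ≤ N - j) (hd : d ≤ j)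
    (hjab : j ≤ a + b) (hda : a < j → d ≤ a) (r k : ℕ) :
    mkT N j h a b d hab hd hjab hda r k = ent (N - j) j a b d r k := rfl

lemma downset_eq_range (s : Finset ℕ) (hs : ∀ a b : ℕ, a ≤ b → b ∈ s → a ∈ s) :
    s = Finset.range s.card := by
  ext k
  simp only [Finset.mem_range]
  constructor
  · intro hk
    have hsub : Finset.range (k + 1) ⊆ s := by
      intro x hx
      exact hs x k (Nat.lt_succ_iff.mp (Finset.mem_range.mp hx)) hk
    have := Finset.card_le_card hsub
    simpa using this
  · intro hk
    by_contra hks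
    have hsub : s ⊆ Finset.range k := by
      intro x hx
      rw [Finset.mem_range]
      by_contra hxk
      push_neg at hxk
      exact hks (hs k x hxk hx)
    have := Finset.card_le_card hsub
    simp only [Finset.card_range] at this
    omega

section Char

variable {N j : ℕ} (h : 2 * j ≤ N) (T : SemistandardYoungTableau (twoRowDiagram N j h))

/-- number of zeros in row 0 -/
def zOf : ℕ := ((Finset.range (N - j)).filter (fun k => T 0 k = 0)).card
/-- number of ones in row 0 -/
def bOf : ℕ := ((Finset.range (N - j)).filter (fun k => T 0 k = 1)).card
/-- number of ones in row 1 -/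
def dOf : ℕ := ((Finset.range j).filter (fun k => T 1 k = 1)).card

lemma row0_le_prefix (c : ℕ) :
    (Finset.range (N - j)).filter (fun k => T 0 k ≤ c)
      = Finset.range ((Finset.range (N - j)).filter (fun k => T 0 k ≤ c)).card := by
  apply downset_eq_range
  intro x y hxy hy
  simp only [Finset.mem_filter, Finset.mem_range] at hy ⊢
  refine ⟨lt_of_le_of_lt hxy hy.1, le_trans ?_ hy.2⟩
  exact T.row_weak_of_le hxy ((mem_twoRow h 0 y).mpr (Or.inl ⟨rfl, hy.1⟩))

lemma row1_ge_one {k : ℕ} (hk : k < j) : 1 ≤ T 1 k := by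
  have := T.col_strict (Nat.zero_lt_one) ((mem_twoRow h 1 k).mpr (Or.inr ⟨rfl, hk⟩))
  omega

lemma row1_le_prefix :
    (Finset.range j).filter (fun k => T 1 k = 1)
      = Finset.range (dOf h T) := by
  rw [dOf]
  apply downset_eq_range
  intro x y hxy hy
  simp only [Finset.mem_filter, Finset.mem_range] at hy ⊢
  have hx : x < j := lt_of_le_of_lt hxy hy.1
  refine ⟨hx, ?_⟩
  have h1 := row1_ge_one h T hx
  have h2 : T 1 x ≤ T 1 y := T.row_weak_of_le hxy ((mem_twoRow h 1 y).mpr (Or.inr ⟨rfl, hy.1⟩))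
  omega

lemma row0_zero_iff {k : ℕ} (hk : k < N - j) : T 0 k = 0 ↔ k < zOf h T := by
  have h0 : (Finset.range (N - j)).filter (fun k => T 0 k ≤ 0)
      = (Finset.range (N - j)).filter (fun k => T 0 k = 0) := by
    simp [Nat.le_zero]
  have := row0_le_prefix h T 0
  rw [h0] at this
  rw [zOf]
  constructor
  · intro hz
    have : k ∈ Finset.range ((Finset.range (N - j)).filter (fun k => T 0 k = 0)).card := by
      rw [← this]; simp [hk, hz]
    simpa using this
  · intro hz
    have hm : k ∈ (Finset.range (N - j)).filter (fun k => T 0 k = 0) := by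
      rw [this]; simpa using hz
    simp at hm
    exact hm.2

end Char

section Char2

variable {N j : ℕ} (h : 2 * j ≤ N) (T : SemistandardYoungTableau (twoRowDiagram N j h))

lemma filter_le_one_eq (hT2 : ∀ a b : ℕ, T a b ≤ 2) :
    (Finset.range (N - j)).filter (fun k => T 0 k ≤ 1)
      = Finset.range (zOf h T + bOf h T) := by
  have hcard : ((Finset.range (N - j)).filter (fun k => T 0 k ≤ 1)).card
      = zOf h T + bOf h T := by
    rw [zOf, bOf, ← Finset.card_union_of_disjoint]
    · congr 1
      rw [← Finset.filter_or]
      apply Finset.filter_congr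
      intro k _
      constructor
      · intro hle
        omega
      · intro hor
        omega
    · rw [Finset.disjoint_filter]
      intro k _ hk
      omega
  rw [← hcard]
  exact row0_le_prefix h T 1

lemma row0_one_iff (hT2 : ∀ a b : ℕ, T a b ≤ 2) {k : ℕ} (hk : k < N - j) :
    T 0 k = 1 ↔ zOf h T ≤ k ∧ k < zOf h T + bOf h T := by
  have h1 := row0_zero_iff h T hk
  have h2 : T 0 k ≤ 1 ↔ k < zOf h T + bOf h T := by
    constructor
    · intro hle
      have : k ∈ (Finset.range (N - j)).filter (fun k => T 0 k ≤ 1) := by simp [hk, hle]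
      rw [filter_le_one_eq h T hT2] at this
      simpa using this
    · intro hlt
      have : k ∈ (Finset.range (N - j)).filter (fun k => T 0 k ≤ 1) := by
        rw [filter_le_one_eq h T hT2]; simpa using hlt
      simp at this
      exact this.2
  omega

lemma row0_two_iff (hT2 : ∀ a b : ℕ, T a b ≤ 2) {k : ℕ} (hk : k < N - j) :
    T 0 k = 2 ↔ zOf h T + bOf h T ≤ k := by
  have h1 := row0_zero_iff h T hk
  have h2 := row0_one_iff h T hT2 hk
  have h3 := hT2 0 k
  constructor
  · intro he
    by_contra hc
    push_neg at hc
    rcases Nat.lt_or_ge k (zOf h T) with hh | hh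
    · have := h1.mpr hh; omega
    · have := h2.mpr ⟨hh, hc⟩; omega
  · intro he
    have a0 : T 0 k ≠ 0 := fun hc => by rw [h1] at hc; omega
    have a1 : T 0 k ≠ 1 := fun hc => by rw [h2] at hc; omega
    omega

lemma row1_one_iff {k : ℕ} (hk : k < j) : T 1 k = 1 ↔ k < dOf h T := by
  have := row1_le_prefix h T
  constructor
  · intro h1
    have hm : k ∈ (Finset.range j).filter (fun k => T 1 k = 1) := by simp [hk, h1]
    rw [this] at hm
    simpa using hm
  · intro h1
    have hm : k ∈ (Finset.range j).filter (fun k => T 1 k = 1) := by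
      rw [this]; simpa using h1
    simp at hm
    exact hm.2

lemma row1_two_iff (hT2 : ∀ a b : ℕ, T a b ≤ 2) {k : ℕ} (hk : k < j) :
    T 1 k = 2 ↔ dOf h T ≤ k := by
  have h1 := row1_one_iff h T hk
  have h2 := row1_ge_one h T hk
  have h3 := hT2 1 k
  constructor
  · intro he
    by_contra hc
    push_neg at hc
    have := h1.mpr hc; omega
  · intro he
    have a1 : T 1 k ≠ 1 := fun hc => by rw [h1] at hc; omega
    omega

lemma zOf_le : zOf h T ≤ N - j := by
  have : (Finset.range (N - j)).filter (fun k => T 0 k = 0) ⊆ Finset.range (N - j) :=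
    Finset.filter_subset _ _
  have := Finset.card_le_card this
  simpa [zOf] using this

lemma zb_le (hT2 : ∀ a b : ℕ, T a b ≤ 2) : zOf h T + bOf h T ≤ N - j := by
  have := Finset.card_le_card (Finset.filter_subset (fun k => T 0 k ≤ 1) (Finset.range (N - j)))
  rw [filter_le_one_eq h T hT2] at this
  simpa using this

lemma dOf_le : dOf h T ≤ j := by
  have := Finset.card_le_card (Finset.filter_subset (fun k => T 1 k = 1) (Finset.range j))
  simpa [dOf] using this

lemma j_le_zb (hT2 : ∀ a b : ℕ, T a b ≤ 2) : j ≤ zOf h T + bOf h T := by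
  by_contra hlt
  push_neg at hlt
  set k := zOf h T + bOf h T with hkdef
  have hkj : k < j := hlt
  have hkN : k < N - j := by omega
  have h2 : T 0 k = 2 := (row0_two_iff h T hT2 hkN).mpr le_rfl
  have := T.col_strict Nat.zero_lt_one ((mem_twoRow h 1 k).mpr (Or.inr ⟨rfl, hkj⟩))
  have := hT2 1 k
  omega

lemma d_le_z (hT2 : ∀ a b : ℕ, T a b ≤ 2) (hzj : zOf h T < j) : dOf h T ≤ zOf h T := by
  by_contra hlt
  push_neg at hlt
  set k := zOf h T with hkdef
  have hb : 0 < bOf h T := by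
    have := j_le_zb h T hT2
    omega
  have hkN : k < N - j := by omega
  have h1 : T 0 k = 1 := (row0_one_iff h T hT2 hkN).mpr ⟨le_rfl, by omega⟩
  have h2 : T 1 k = 1 := (row1_one_iff h T hzj).mpr hlt
  have := T.col_strict Nat.zero_lt_one ((mem_twoRow h 1 k).mpr (Or.inr ⟨rfl, hzj⟩))
  omega

lemma zero_count_eq :
    ((twoRowDiagram N j h).cells.filter (fun c => T c.1 c.2 = 0)).card = zOf h T := by
  rw [zOf]
  apply Finset.card_bij (fun c _ => c.2)
  · rintro ⟨r, k⟩ hc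
    simp only [Finset.mem_filter, YoungDiagram.mem_cells] at hc
    obtain ⟨hmem, he⟩ := hc
    rw [mem_twoRow] at hmem
    rcases hmem with ⟨hr, hk⟩ | ⟨hr, hk⟩
    · subst hr
      simp [hk, he]
    · subst hr
      exfalso
      have := row1_ge_one h T hk
      omega
  · rintro ⟨r1, k1⟩ hc1 ⟨r2, k2⟩ hc2 hk
    simp only [Finset.mem_filter, YoungDiagram.mem_cells, mem_twoRow] at hc1 hc2
    obtain ⟨hm1, he1⟩ := hc1
    obtain ⟨hm2, he2⟩ := hc2
    simp only at hk
    have hr1 : r1 = 0 := by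
      rcases hm1 with ⟨hr, hkk⟩ | ⟨hr, hkk⟩
      · exact hr
      · exfalso; have := row1_ge_one h T hkk; subst hr; omega
    have hr2 : r2 = 0 := by
      rcases hm2 with ⟨hr, hkk⟩ | ⟨hr, hkk⟩
      · exact hr
      · exfalso; have := row1_ge_one h T hkk; subst hr; omega
    simp [hr1, hr2, hk]
  · intro k hk
    simp only [Finset.mem_filter, Finset.mem_range] at hk
    refine ⟨(0, k), ?_, rfl⟩
    simp only [Finset.mem_filter, YoungDiagram.mem_cells, mem_twoRow]
    refine ⟨Or.inl ⟨by trivial, hk.1⟩, ?_⟩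
    · simpa using hk.2

lemma T_eq_mkT (hT2 : ∀ a b : ℕ, T a b ≤ 2) :
    T = mkT N j h (zOf h T) (bOf h T) (dOf h T) (zb_le h T hT2) (dOf_le h T)
        (j_le_zb h T hT2) (d_le_z h T hT2) := by
  ext r k
  rw [mkT_apply]
  rcases r with _ | _ | r
  · rcases Nat.lt_or_ge k (N - j) with hk | hk
    · have hv : T 0 k = 0 ∧ k < zOf h T ∨
          T 0 k = 1 ∧ zOf h T ≤ k ∧ k < zOf h T + bOf h T ∨
          T 0 k = 2 ∧ zOf h T + bOf h T ≤ k := by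
        rcases Nat.lt_or_ge k (zOf h T) with hh | hh
        · exact Or.inl ⟨(row0_zero_iff h T hk).mpr hh, hh⟩
        · rcases Nat.lt_or_ge k (zOf h T + bOf h T) with hh2 | hh2
          · exact Or.inr (Or.inl ⟨(row0_one_iff h T hT2 hk).mpr ⟨hh, hh2⟩, hh, hh2⟩)
          · exact Or.inr (Or.inr ⟨(row0_two_iff h T hT2 hk).mpr hh2, hh2⟩)
      simp only [ent]
      split_ifs <;> first | exact ‹False›.elim | omega
    · have hz : T 0 k = 0 := T.zeros (by rw [mem_twoRow]; omega)
      have hzb := zb_le h T hT2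
      simp only [ent]
      split_ifs <;> first | exact ‹False›.elim | omega
  · show T 1 k = ent (N - j) j (zOf h T) (bOf h T) (dOf h T) 1 k
    rcases Nat.lt_or_ge k j with hk | hk
    · have hv : T 1 k = 1 ∧ k < dOf h T ∨ T 1 k = 2 ∧ dOf h T ≤ k := by
        rcases Nat.lt_or_ge k (dOf h T) with hh | hh
        · exact Or.inl ⟨(row1_one_iff h T hk).mpr hh, hh⟩
        · exact Or.inr ⟨(row1_two_iff h T hT2 hk).mpr hh, hh⟩
      simp only [ent]
      split_ifs <;> first | exact ‹False›.elim | omega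
    · have hz : T 1 k = 0 := T.zeros (by rw [mem_twoRow]; omega)
      have hd := dOf_le h T
      simp only [ent]
      split_ifs <;> first | exact ‹False›.elim | omega
  · show T (r + 2) k = ent (N - j) j (zOf h T) (bOf h T) (dOf h T) (r + 2) k
    have hz : T (r + 2) k = 0 := T.zeros (by rw [mem_twoRow]; omega)
    simp only [ent]
    split_ifs <;> first | exact ‹False›.elim | omega

end Char2

section MkTParams

variable {N j : ℕ} (h : 2 * j ≤ N) (a b d : ℕ) (hab : a + b ≤ N - j) (hd : d ≤ j)
    (hjab : j ≤ a + b) (hda : a < j → d ≤ a)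

lemma zOf_mkT : zOf h (mkT N j h a b d hab hd hjab hda) = a := by
  rw [zOf]
  have he : (Finset.range (N - j)).filter
      (fun k => mkT N j h a b d hab hd hjab hda 0 k = 0) = Finset.range a := by
    ext k
    simp only [Finset.mem_filter, Finset.mem_range, mkT_apply, ent]
    split_ifs <;> first | exact ‹False›.elim | omega | (simp_all; omega) | simp_all
  rw [he, Finset.card_range]

lemma bOf_mkT : bOf h (mkT N j h a b d hab hd hjab hda) = b := by
  rw [bOf]
  have he : (Finset.range (N - j)).filter
      (fun k => mkT N j h a b d hab hd hjab hda 0 k = 1) = Finset.Ico a (a + b) := by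
    ext k
    simp only [Finset.mem_filter, Finset.mem_range, Finset.mem_Ico, mkT_apply, ent]
    split_ifs <;> first | exact ‹False›.elim | omega | (simp_all; omega) | simp_all
  rw [he, Nat.card_Ico]
  omega

lemma dOf_mkT : dOf h (mkT N j h a b d hab hd hjab hda) = d := by
  rw [dOf]
  have he : (Finset.range j).filter
      (fun k => mkT N j h a b d hab hd hjab hda 1 k = 1) = Finset.range d := by
    ext k
    simp only [Finset.mem_filter, Finset.mem_range, mkT_apply, ent]
    split_ifs <;> first | exact ‹False›.elim | omega | (simp_all; omega) | simp_all
  rw [he, Finset.card_range]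

lemma ent_le_two (r k : ℕ) : mkT N j h a b d hab hd hjab hda r k ≤ 2 := by
  rw [mkT_apply, ent]
  split_ifs <;> omega

end MkTParams

/-- parameter set -/
def Spair (N j i : ℕ) : Finset (ℕ × ℕ) :=
  (Finset.range (N - j + 1) ×ˢ Finset.range (j + 1)).filter
    (fun p => i + p.1 ≤ N - j ∧ j ≤ i + p.1 ∧ (i < j → p.2 ≤ i))

lemma mem_Spair (N j i : ℕ) (p : ℕ × ℕ) :
    p ∈ Spair N j i ↔ i + p.1 ≤ N - j ∧ j ≤ i + p.1 ∧ p.2 ≤ j ∧ (i < j → p.2 ≤ i) := by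
  simp only [Spair, Finset.mem_filter, Finset.mem_product, Finset.mem_range]
  omega

def theEquiv (N j i : ℕ) (h : 2 * j ≤ N) :
    {T : SemistandardYoungTableau (twoRowDiagram N j h) //
        (∀ a b : ℕ, T a b ≤ 2) ∧
        ((twoRowDiagram N j h).cells.filter (fun c => T c.1 c.2 = 0)).card = i}
      ≃ {p : ℕ × ℕ // p ∈ Spair N j i} where
  toFun := fun ⟨T, hT2, hcount⟩ => ⟨(bOf h T, dOf h T), by
    have hz : zOf h T = i := (zero_count_eq h T).symm.trans hcount
    rw [mem_Spair]
    refine ⟨?_, ?_, ?_, ?_⟩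
    · have := zb_le h T hT2; omega
    · have := j_le_zb h T hT2; omega
    · exact dOf_le h T
    · intro hij
      have := d_le_z h T hT2 (by omega)
      omega⟩
  invFun := fun p =>
    ⟨mkT N j h i p.1.1 p.1.2 ((mem_Spair N j i p.1).mp p.2).1
        ((mem_Spair N j i p.1).mp p.2).2.2.1 ((mem_Spair N j i p.1).mp p.2).2.1
        ((mem_Spair N j i p.1).mp p.2).2.2.2,
      fun r c => ent_le_two h i p.1.1 p.1.2 _ _ _ _ r c,
      by rw [zero_count_eq, zOf_mkT]⟩
  left_inv := fun ⟨T, hT2, hcount⟩ => by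
    have hz : zOf h T = i := (zero_count_eq h T).symm.trans hcount
    apply Subtype.ext
    apply SemistandardYoungTableau.ext
    intro r k
    show ent (N - j) j i (bOf h T) (dOf h T) r k = T r k
    conv_rhs => rw [T_eq_mkT h T hT2]
    rw [mkT_apply, hz]
  right_inv := fun ⟨⟨b, d⟩, hp⟩ => by
    apply Subtype.ext
    show (bOf h _, dOf h _) = (b, d)
    rw [bOf_mkT, dOf_mkT]

lemma card_Spair_le {N j i : ℕ} (h2j : 2 * j ≤ N) (hij : i ≤ j) :
    (Spair N j i).card = (i + 1) * (N - 2 * j + 1) := by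
  have he : Spair N j i = Finset.Icc (j - i) (N - j - i) ×ˢ Finset.range (i + 1) := by
    ext p
    rw [mem_Spair]
    simp only [Finset.mem_product, Finset.mem_Icc, Finset.mem_range]
    omega
  rw [he, Finset.card_product, Nat.card_Icc, Finset.card_range]
  have e1 : N - j - i + 1 - (j - i) = N - 2 * j + 1 := by omega
  rw [e1, mul_comm]

lemma card_Spair_gt {N j i : ℕ} (h2j : 2 * j ≤ N) (hij : j < i) (hiN : i ≤ N - j) :
    (Spair N j i).card = (j + 1) * (N - i - j + 1) := by
  have he : Spair N j i = Finset.range (N - j - i + 1) ×ˢ Finset.range (j + 1) := by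
    ext p
    rw [mem_Spair]
    simp only [Finset.mem_product, Finset.mem_range]
    omega
  rw [he, Finset.card_product, Finset.card_range, Finset.card_range]
  have e1 : N - j - i + 1 = N - i - j + 1 := by omega
  rw [e1, mul_comm]

end Stmt5Aux

/-- Counting semistandard Young tableaux of shape `(N - j, j)` over the three-letter ordered
alphabet `{0, 1, 2}` by the number `i` of entries equal to `0`: if `i ≤ j` there are
`(i+1)(N-2j+1)` such tableaux, and if `j < i ≤ N - j` there are `(j+1)(N-i-j+1)` of them. -/
theorem stmt5 (N j i : ℕ) (h2j : 2 * j ≤ N) :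
    (i ≤ j →
      Nat.card {T : SemistandardYoungTableau (twoRowDiagram N j h2j) //
          (∀ a b : ℕ, T a b ≤ 2) ∧
          ((twoRowDiagram N j h2j).cells.filter (fun c => T c.1 c.2 = 0)).card = i} =
        (i + 1) * (N - 2 * j + 1)) ∧
    (j < i → i ≤ N - j →
      Nat.card {T : SemistandardYoungTableau (twoRowDiagram N j h2j) //
          (∀ a b : ℕ, T a b ≤ 2) ∧
          ((twoRowDiagram N j h2j).cells.filter (fun c => T c.1 c.2 = 0)).card = i} =
        (j + 1) * (N - i - j + 1)) := by
  constructor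
  · intro hij
    rw [Nat.card_congr (Stmt5Aux.theEquiv N j i h2j), Nat.card_eq_finsetCard,
      Stmt5Aux.card_Spair_le h2j hij]
  · intro hij hiN
    rw [Nat.card_congr (Stmt5Aux.theEquiv N j i h2j), Nat.card_eq_finsetCard,
      Stmt5Aux.card_Spair_gt h2j hij hiN]
end

section
/- Let N and j be natural numbers with 2j ≤ N and N ≥ 1, and let t ∈ [0, 1/2]. Define s_j(t) := Σ_T (1 − 2t)^{α₁(T)} · t^{N − α₁(T)}, where the sum ranges over all semistandard Young tableaux T of shape (N − j, j) with entries in the three-letter ordered alphabet {0, 1, 2}, and α₁(T) denotes the number of entries of T equal to 0 (this is the Schur polynomial s_{(N−j,j)}(1 − 2t, t, t)). Then s_j(t) ≤ (j + 1)(1 − 2t)^{N − j} t^{j} + Σ_{k=j+1}^{N} (k + 1)² t^{k}. -/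
/-- The number of entries equal to `0` in a semistandard Young tableau. -/
def numZeros {μ : YoungDiagram} (T : SemistandardYoungTableau μ) : ℕ :=
  (μ.cells.filter (fun c => T c.1 c.2 = 0)).card

/-- The Schur polynomial `s_{(N-j,j)}(1-2t, t, t)`: the sum over all semistandard Young
tableaux `T` of shape `(N-j, j)` over the three-letter ordered alphabet `{0, 1, 2}` of
`(1-2t)^{α₁(T)} t^{N-α₁(T)}`, where `α₁(T)` is the number of entries of `T` equal to `0`. -/
noncomputable def schurSJ (N j : ℕ) (h : 2 * j ≤ N) (t : ℝ) : ℝ :=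
  ∑ᶠ T : {T : SemistandardYoungTableau (twoRowDiagram N j h) // ∀ a b : ℕ, T a b ≤ 2},
    (1 - 2 * t) ^ numZeros T.1 * t ^ (N - numZeros T.1)

lemma mem_twoRow {N j : ℕ} (h : 2 * j ≤ N) (c : ℕ × ℕ) :
    c ∈ twoRowDiagram N j h ↔ (c.1 = 0 ∧ c.2 < N - j) ∨ (c.1 = 1 ∧ c.2 < j) := by
  obtain ⟨a, b⟩ := c
  simp only [twoRowDiagram, YoungDiagram.mem_ofRowLens, List.length_cons, List.length_nil]
  constructor
  · rintro ⟨hl, hb⟩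
    interval_cases a <;> simp_all
  · rintro (⟨rfl, hb⟩ | ⟨rfl, hb⟩) <;> exact ⟨by omega, by simpa⟩

lemma mono_le_iff {L v i : ℕ} {f : ℕ → ℕ}
    (hf : ∀ i₁ i₂, i₁ ≤ i₂ → i₂ < L → f i₁ ≤ f i₂) (hi : i < L) :
    f i ≤ v ↔ i < ((Finset.range L).filter (fun k => f k ≤ v)).card := by
  constructor
  · intro hfi
    have hsub : Finset.range (i+1) ⊆ (Finset.range L).filter (fun k => f k ≤ v) := by
      intro k hk
      simp only [Finset.mem_range] at hk
      simp only [Finset.mem_filter, Finset.mem_range]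
      exact ⟨by omega, le_trans (hf k i (by omega) hi) hfi⟩
    have := Finset.card_le_card hsub
    simpa using this
  · intro hcard
    by_contra hfi
    push_neg at hfi
    have hsub : (Finset.range L).filter (fun k => f k ≤ v) ⊆ Finset.range i := by
      intro k hk
      simp only [Finset.mem_filter, Finset.mem_range] at hk
      simp only [Finset.mem_range]
      by_contra hk2
      push_neg at hk2
      exact absurd (le_trans (hf i k hk2 hk.1) hk.2) (by omega)
    have := Finset.card_le_card hsub
    simp only [Finset.card_range] at this
    omega

section Aux
variable {N j : ℕ} {h : 2 * j ≤ N}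

lemma row0_mono (T : SemistandardYoungTableau (twoRowDiagram N j h)) :
    ∀ i₁ i₂, i₁ ≤ i₂ → i₂ < N - j → T 0 i₁ ≤ T 0 i₂ := by
  intro i₁ i₂ hle hlt
  rcases hle.eq_or_lt with rfl | hlt'
  · exact le_refl _
  · exact T.row_weak hlt' ((mem_twoRow h _).mpr (Or.inl ⟨rfl, hlt⟩))

lemma row1_mono (T : SemistandardYoungTableau (twoRowDiagram N j h)) :
    ∀ i₁ i₂, i₁ ≤ i₂ → i₂ < j → T 1 i₁ ≤ T 1 i₂ := by
  intro i₁ i₂ hle hlt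
  rcases hle.eq_or_lt with rfl | hlt'
  · exact le_refl _
  · exact T.row_weak hlt' ((mem_twoRow h _).mpr (Or.inr ⟨rfl, hlt⟩))

lemma row1_pos (T : SemistandardYoungTableau (twoRowDiagram N j h)) {i : ℕ} (hi : i < j) :
    1 ≤ T 1 i := by
  have := T.col_strict zero_lt_one ((mem_twoRow h _).mpr (Or.inr ⟨rfl, hi⟩))
  omega

/-- Classification map. -/
def Phi (N j : ℕ) (h : 2 * j ≤ N)
    (T : {T : SemistandardYoungTableau (twoRowDiagram N j h) // ∀ a b : ℕ, T a b ≤ 2}) :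
    ℕ × ℕ × ℕ :=
  (((Finset.range (N - j)).filter (fun i => T.1 0 i ≤ 0)).card,
   ((Finset.range (N - j)).filter (fun i => T.1 0 i ≤ 1)).card,
   ((Finset.range j).filter (fun i => T.1 1 i ≤ 1)).card)

lemma phi_inj : Function.Injective (Phi N j h) := by
  intro T T' hEq
  have h0 : (Phi N j h T).1 = (Phi N j h T').1 := by rw [hEq]
  have h1 : (Phi N j h T).2.1 = (Phi N j h T').2.1 := by rw [hEq]
  have h2 : (Phi N j h T).2.2 = (Phi N j h T').2.2 := by rw [hEq]
  apply Subtype.ext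
  ext i i'
  by_cases hm : (i, i') ∈ twoRowDiagram N j h
  · rw [mem_twoRow] at hm
    rcases hm with ⟨hi, hi'⟩ | ⟨hi, hi'⟩
    · subst hi
      have a0 : T.1 0 i' ≤ 0 ↔ i' < ((Finset.range (N - j)).filter (fun k => T.1 0 k ≤ 0)).card :=
        mono_le_iff (row0_mono T.1) hi'
      have a1 : T.1 0 i' ≤ 1 ↔ i' < ((Finset.range (N - j)).filter (fun k => T.1 0 k ≤ 1)).card :=
        mono_le_iff (row0_mono T.1) hi'
      have b0 : T'.1 0 i' ≤ 0 ↔ i' < ((Finset.range (N - j)).filter (fun k => T'.1 0 k ≤ 0)).card :=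
        mono_le_iff (row0_mono T'.1) hi'
      have b1 : T'.1 0 i' ≤ 1 ↔ i' < ((Finset.range (N - j)).filter (fun k => T'.1 0 k ≤ 1)).card :=
        mono_le_iff (row0_mono T'.1) hi'
      have c2 := T.2 0 i'
      have c2' := T'.2 0 i'
      simp only [Phi, Prod.mk.injEq] at h0 h1
      omega
    · subst hi
      have a1 : T.1 1 i' ≤ 1 ↔ i' < ((Finset.range j).filter (fun k => T.1 1 k ≤ 1)).card :=
        mono_le_iff (row1_mono T.1) hi'
      have b1 : T'.1 1 i' ≤ 1 ↔ i' < ((Finset.range j).filter (fun k => T'.1 1 k ≤ 1)).card :=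
        mono_le_iff (row1_mono T'.1) hi'
      have c1 : 1 ≤ T.1 1 i' := row1_pos T.1 hi'
      have c1' : 1 ≤ T'.1 1 i' := row1_pos T'.1 hi'
      have c2 := T.2 1 i'
      have c2' := T'.2 1 i'
      simp only [Phi, Prod.mk.injEq] at h2
      omega
  · rw [T.1.zeros hm, T'.1.zeros hm]

lemma cells_twoRow :
    (twoRowDiagram N j h).cells =
      ((Finset.range (N - j)).image fun i => ((0 : ℕ), i)) ∪
        ((Finset.range j).image fun i => ((1 : ℕ), i)) := by
  ext c
  rw [YoungDiagram.mem_cells, mem_twoRow]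
  obtain ⟨a, b⟩ := c
  simp only [Finset.mem_union, Finset.mem_image, Finset.mem_range]
  constructor
  · rintro (⟨rfl, hb⟩ | ⟨rfl, hb⟩)
    · exact Or.inl ⟨b, hb, rfl⟩
    · exact Or.inr ⟨b, hb, rfl⟩
  · rintro (⟨x, hx, hxe⟩ | ⟨x, hx, hxe⟩) <;> (cases hxe; simp_all)

lemma numZeros_eq (T : {T : SemistandardYoungTableau (twoRowDiagram N j h) // ∀ a b : ℕ, T a b ≤ 2}) :
    numZeros T.1 = (Phi N j h T).1 := by
  classical
  rw [numZeros, cells_twoRow, Finset.filter_union]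
  have hempty : ((Finset.range j).image fun i => ((1 : ℕ), i)).filter
      (fun c => T.1 c.1 c.2 = 0) = ∅ := by
    rw [Finset.filter_eq_empty_iff]
    rintro c hc
    simp only [Finset.mem_image, Finset.mem_range] at hc
    obtain ⟨i, hi, rfl⟩ := hc
    have := row1_pos T.1 hi
    show T.1 1 i ≠ 0
    omega
  rw [hempty, Finset.union_empty, Finset.filter_image,
    Finset.card_image_of_injective _ (fun a b hab => by simpa using hab)]
  simp only [Phi]
  congr 1
  ext i
  simp [Nat.le_zero]

end Aux

section Aux2
variable {N j : ℕ} {h : 2 * j ≤ N}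

lemma phi_mem (T : {T : SemistandardYoungTableau (twoRowDiagram N j h) // ∀ a b : ℕ, T a b ≤ 2}) :
    (Phi N j h T).1 ≤ (Phi N j h T).2.1 ∧ (Phi N j h T).2.1 ≤ N - j ∧ (Phi N j h T).2.2 ≤ j := by
  simp only [Phi]
  refine ⟨?_, ?_, ?_⟩
  · refine Finset.card_le_card ?_
    intro x hx
    simp only [Finset.mem_filter] at hx ⊢
    exact ⟨hx.1, by omega⟩
  · simpa using Finset.card_filter_le (Finset.range (N - j)) (fun i => T.1 0 i ≤ 1)
  · simpa using Finset.card_filter_le (Finset.range j) (fun i => T.1 1 i ≤ 1)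

end Aux2

noncomputable instance tabFintype (N j : ℕ) (h : 2 * j ≤ N) :
    Fintype {T : SemistandardYoungTableau (twoRowDiagram N j h) // ∀ a b : ℕ, T a b ≤ 2} := by
  apply Fintype.ofInjective
    (β := ((twoRowDiagram N j h).cells → Fin 3))
    (fun T => fun c => ⟨T.1 c.1.1 c.1.2, by have := T.2 c.1.1 c.1.2; omega⟩)
  intro T T' hTT
  apply Subtype.ext
  ext i i'
  by_cases hc : (i, i') ∈ twoRowDiagram N j h
  · have := congrArg Fin.val (congrFun hTT ⟨(i, i'), (YoungDiagram.mem_cells _).mpr hc⟩)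
    simpa using this
  · rw [T.1.zeros hc, T'.1.zeros hc]



/-- Upper bound on the Schur polynomial `s_j(t) = s_{(N-j,j)}(1-2t, t, t)`:
`s_j(t) ≤ (j+1)(1-2t)^{N-j} t^j + Σ_{k=j+1}^N (k+1)² t^k`. -/
theorem stmt6 (N j : ℕ) (hN : 1 ≤ N) (h2j : 2 * j ≤ N) (t : ℝ)
    (ht0 : 0 ≤ t) (ht1 : t ≤ 1 / 2) :
    schurSJ N j h2j t ≤
      ((j : ℝ) + 1) * (1 - 2 * t) ^ (N - j) * t ^ j +
        ∑ k ∈ Finset.Icc (j + 1) N, ((k : ℝ) + 1) ^ 2 * t ^ k := by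
  classical
  haveI : Fintype {T : SemistandardYoungTableau (twoRowDiagram N j h2j) // ∀ a b : ℕ, T a b ≤ 2} :=
    tabFintype N j h2j
  have hjN : j ≤ N := by omega
  have h2t : 0 ≤ 1 - 2 * t := by linarith
  have h2t1 : 1 - 2 * t ≤ 1 := by linarith
  set D : Finset (ℕ × ℕ × ℕ) :=
    (Finset.range (N - j + 1)).biUnion
      (fun z => {z} ×ˢ (Finset.Icc z (N - j) ×ˢ Finset.range (j + 1))) with hD
  have key1 : schurSJ N j h2j t =
      ∑ p ∈ Finset.univ.image (Phi N j h2j), (1 - 2 * t) ^ p.1 * t ^ (N - p.1) := by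
    rw [schurSJ, finsum_eq_sum_of_fintype,
      Finset.sum_image (fun x _ y _ hxy => phi_inj hxy)]
    exact Finset.sum_congr rfl fun T _ => by rw [numZeros_eq]
  have hsub : Finset.univ.image (Phi N j h2j) ⊆ D := by
    intro p hp
    simp only [Finset.mem_image, Finset.mem_univ, true_and] at hp
    obtain ⟨T, rfl⟩ := hp
    have hb := phi_mem (h := h2j) T
    simp only [hD, Finset.mem_biUnion, Finset.mem_range, Finset.mem_product,
      Finset.mem_singleton, Finset.mem_Icc]
    exact ⟨(Phi N j h2j T).1, by omega, rfl, ⟨hb.1, hb.2.1⟩, by omega⟩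
  have key2 : ∑ p ∈ Finset.univ.image (Phi N j h2j), (1 - 2 * t) ^ p.1 * t ^ (N - p.1)
      ≤ ∑ p ∈ D, (1 - 2 * t) ^ p.1 * t ^ (N - p.1) := by
    refine Finset.sum_le_sum_of_subset_of_nonneg hsub fun p _ _ => ?_
    positivity
  have hdisj : (↑(Finset.range (N - j + 1)) : Set ℕ).PairwiseDisjoint
      (fun z => {z} ×ˢ (Finset.Icc z (N - j) ×ˢ Finset.range (j + 1))) := by
    intro z _ z' _ hzz
    refine Finset.disjoint_left.mpr fun p hp hp' => ?_
    simp only [Finset.mem_product, Finset.mem_singleton] at hp hp'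
    exact hzz (by rw [← hp.1, hp'.1])
  have key3 : ∑ p ∈ D, (1 - 2 * t) ^ p.1 * t ^ (N - p.1)
      = ∑ z ∈ Finset.range (N - j + 1),
          ((N - j + 1 - z) * (j + 1)) • ((1 - 2 * t) ^ z * t ^ (N - z)) := by
    rw [hD, Finset.sum_biUnion hdisj]
    refine Finset.sum_congr rfl fun z hz => ?_
    rw [Finset.sum_product, Finset.sum_singleton]
    trans ∑ _y ∈ Finset.Icc z (N - j) ×ˢ Finset.range (j + 1), ((1 - 2 * t) ^ z * t ^ (N - z))
    · exact Finset.sum_congr rfl fun y _ => rfl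
    · rw [Finset.sum_const, Finset.card_product, Nat.card_Icc, Finset.card_range]
  rw [key1]
  refine le_trans (le_trans key2 (le_of_eq key3)) ?_
  rw [Finset.sum_range_succ]
  have hlast : ((N - j + 1 - (N - j)) * (j + 1)) • ((1 - 2 * t) ^ (N - j) * t ^ (N - (N - j)))
      = ((j : ℝ) + 1) * (1 - 2 * t) ^ (N - j) * t ^ j := by
    have e1 : N - (N - j) = j := by omega
    have e2 : N - j + 1 - (N - j) = 1 := by omega
    rw [e1, e2, one_mul, nsmul_eq_mul]
    push_cast
    ring
  rw [hlast, add_comm (((j : ℝ) + 1) * (1 - 2 * t) ^ (N - j) * t ^ j)]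
  refine add_le_add ?_ le_rfl
  have hmain : ∑ z ∈ Finset.range (N - j),
        ((N - j + 1 - z) * (j + 1)) • ((1 - 2 * t) ^ z * t ^ (N - z))
      ≤ ∑ z ∈ Finset.range (N - j), (((N - z : ℕ) : ℝ) + 1) ^ 2 * t ^ (N - z) := by
    refine Finset.sum_le_sum fun z hz => ?_
    simp only [Finset.mem_range] at hz
    rw [nsmul_eq_mul]
    have hcoef : ((N - j + 1 - z) * (j + 1)) ≤ (N - z + 1) ^ 2 := by
      calc (N - j + 1 - z) * (j + 1) ≤ (N - z + 1) * (N - z + 1) :=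
            Nat.mul_le_mul (by omega) (by omega)
        _ = (N - z + 1) ^ 2 := by ring
    have hcoefR : (((N - j + 1 - z) * (j + 1) : ℕ) : ℝ) ≤ (((N - z : ℕ) : ℝ) + 1) ^ 2 := by
      have h1 := Nat.cast_le (α := ℝ).mpr hcoef
      have h2 : (((N - z + 1) ^ 2 : ℕ) : ℝ) = (((N - z : ℕ) : ℝ) + 1) ^ 2 := by
        push_cast
        ring
      linarith [h1, h2.le, h2.ge]
    have hpow : (1 - 2 * t) ^ z * t ^ (N - z) ≤ t ^ (N - z) := by
      have h1 : (1 - 2 * t) ^ z ≤ 1 := pow_le_one₀ h2t h2t1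
      have h2 : (0 : ℝ) ≤ t ^ (N - z) := pow_nonneg ht0 _
      nlinarith
    calc (((N - j + 1 - z) * (j + 1) : ℕ) : ℝ) * ((1 - 2 * t) ^ z * t ^ (N - z))
        ≤ (((N - j + 1 - z) * (j + 1) : ℕ) : ℝ) * t ^ (N - z) :=
          mul_le_mul_of_nonneg_left hpow (by positivity)
      _ ≤ (((N - z : ℕ) : ℝ) + 1) ^ 2 * t ^ (N - z) :=
          mul_le_mul_of_nonneg_right hcoefR (pow_nonneg ht0 _)
  refine le_trans hmain (le_of_eq ?_)
  refine Finset.sum_nbij' (fun z => N - z) (fun k => N - k) ?_ ?_ ?_ ?_ ?_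
  · intro a ha
    simp only [Finset.mem_range] at ha
    simp only [Finset.mem_Icc]
    omega
  · intro a ha
    simp only [Finset.mem_Icc] at ha
    simp only [Finset.mem_range]
    omega
  · intro a ha
    simp only [Finset.mem_range] at ha
    show N - (N - a) = a
    omega
  · intro a ha
    simp only [Finset.mem_Icc] at ha
    show N - (N - a) = a
    omega
  · intro a _
    rfl
end

section
/- Let d and r be positive integers with r < d, let ε > 0, and let p ∈ ℝ^d satisfy p₁ ≥ p₂ ≥ ⋯ ≥ p_d ≥ 0, Σ_{j=1}^d p_j = 1, and Σ_{j=r+1}^d p_j ≥ ε. Then there exists a real q with ε/(d−r) ≤ q ≤ (1−ε)/r such that, setting k := ⌊ε/q⌋, the vector p is majorized by the d-dimensional vector v whose first entry is 1 − ε − (r−1)q, whose next k + r − 1 entries equal q, whose next entry (when within range) is ε − qk, and whose remaining entries are 0. -/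
lemma auxStrictMono' {m d : ℕ} (f : Fin m → Fin d) (hf : StrictMono f) :
    ∀ i : Fin m, (i : ℕ) ≤ (f i : ℕ) := by
  have H : ∀ n : ℕ, ∀ h : n < m, n ≤ (f ⟨n, h⟩ : ℕ) := by
    intro n
    induction n with
    | zero => intro h; exact Nat.zero_le _
    | succ n ih =>
      intro h
      have h' : n < m := by omega
      have h1 : (f ⟨n, h'⟩ : ℕ) < (f ⟨n + 1, h⟩ : ℕ) :=
        hf (show (⟨n, h'⟩ : Fin m) < ⟨n + 1, h⟩ by simp [Fin.lt_def])
      have h2 := ih h'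
      omega
  intro i; simpa using H i.1 i.2

lemma sum_le_sum_initial' {d m : ℕ} (p : Fin d → ℝ) (hmono : Antitone p)
    (P : ℕ → ℝ) (hP : ∀ (n : ℕ) (h : n < d), P n = p ⟨n, h⟩)
    (s : Finset (Fin d)) (hs : s.card = m) (hmd : m ≤ d) :
    ∑ j ∈ s, p j ≤ ∑ n ∈ Finset.range m, P n := by
  have h1 : ∑ j ∈ s, p j = ∑ i : Fin m, p (s.orderIsoOfFin hs i) := by
    rw [← Finset.sum_attach s p]
    exact (Fintype.sum_equiv (s.orderIsoOfFin hs).toEquiv _ _ (fun i => rfl)).symm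
  have hmono' : StrictMono (fun i : Fin m => ((s.orderIsoOfFin hs i : Fin d))) := by
    intro a b hab
    exact Subtype.coe_lt_coe.mpr ((s.orderIsoOfFin hs).strictMono hab)
  have h2 : ∀ i : Fin m, p ((s.orderIsoOfFin hs i : Fin d)) ≤ P (i : ℕ) := by
    intro i
    have hle : (i : ℕ) ≤ ((s.orderIsoOfFin hs i : Fin d) : ℕ) := auxStrictMono' _ hmono' i
    have hid : (i : ℕ) < d := lt_of_lt_of_le i.2 hmd
    rw [hP _ hid]
    exact hmono (by exact hle)
  calc ∑ j ∈ s, p j = ∑ i : Fin m, p (s.orderIsoOfFin hs i) := h1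
    _ ≤ ∑ i : Fin m, P (i : ℕ) := Finset.sum_le_sum fun i _ => h2 i
    _ = ∑ n ∈ Finset.range m, P n := Fin.sum_univ_eq_sum_range _ _

/-- The sum of the `m` largest entries of a vector `u ∈ ℝ^d` (as a supremum over all
subsets of `m` coordinates). -/
noncomputable def sumLargest {d : ℕ} (u : Fin d → ℝ) (m : ℕ) : ℝ :=
  sSup {x : ℝ | ∃ s : Finset (Fin d), s.card = m ∧ x = ∑ j ∈ s, u j}

/-- Majorization claim: every nonincreasing probability vector `p ∈ ℝ^d` with tail sum
`Σ_{j=r+1}^d p_j ≥ ε` is majorized by a vector of the form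
`(1 - ε - (r-1)q, q, …, q, ε - qk, 0, …, 0)` where `q ∈ [ε/(d-r), (1-ε)/r]`, `k = ⌊ε/q⌋`,
the entry `q` is repeated `k + r - 1` times, and the entry `ε - qk` appears when within range. -/
theorem stmt10 (d r : ℕ) (hr : 0 < r) (hrd : r < d) (ε : ℝ) (hε : 0 < ε)
    (p : Fin d → ℝ) (hmono : Antitone p) (hnn : ∀ j, 0 ≤ p j)
    (hsum : ∑ j, p j = 1)
    (htail : ε ≤ ∑ j ∈ Finset.univ.filter (fun j : Fin d => r ≤ (j : ℕ)), p j) :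
    ∃ q : ℝ, ε / ((d : ℝ) - (r : ℝ)) ≤ q ∧ q ≤ (1 - ε) / (r : ℝ) ∧
      ∃ v : Fin d → ℝ,
        (∀ j : Fin d, v j =
          if (j : ℕ) = 0 then 1 - ε - ((r : ℝ) - 1) * q
          else if (j : ℕ) ≤ ⌊ε / q⌋₊ + r - 1 then q
          else if (j : ℕ) = ⌊ε / q⌋₊ + r then ε - q * (⌊ε / q⌋₊ : ℝ)
          else 0) ∧
        (∑ j, v j = ∑ j, p j) ∧
        (∀ m : ℕ, sumLargest p m ≤ sumLargest v m) := by
  classical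
  have hrd' : (r : ℝ) < (d : ℝ) := by exact_mod_cast hrd
  set q : ℝ := p ⟨r, hrd⟩ with hqdef
  set P : ℕ → ℝ := fun n => if h : n < d then p ⟨n, h⟩ else 0 with hPdef
  have hPval : ∀ (n : ℕ) (h : n < d), P n = p ⟨n, h⟩ := by
    intro n h; simp only [hPdef]; exact dif_pos h
  have hPnn : ∀ n, 0 ≤ P n := by
    intro n; simp only [hPdef]
    split
    · exact hnn _
    · exact le_refl 0
  have hPanti : Antitone P := by
    intro a b hab
    by_cases hb : b < d
    · have ha : a < d := lt_of_le_of_lt hab hb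
      rw [hPval a ha, hPval b hb]
      exact hmono (by exact hab)
    · simp only [hPdef]
      rw [dif_neg hb]
      exact hPnn a
  have hPr : P r = q := hPval r hrd
  have hPsum : ∑ n ∈ Finset.range d, P n = 1 := by
    rw [← hsum, ← Fin.sum_univ_eq_sum_range]
    exact Finset.sum_congr rfl fun i _ => by rw [hPval _ i.2]
  have hfil : (Finset.range d).filter (fun n => r ≤ n) = Finset.Ico r d := by
    ext n; simp [Finset.mem_filter, Finset.mem_range, Finset.mem_Ico]; omega
  have hIco : ε ≤ ∑ n ∈ Finset.Ico r d, P n := by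
    refine htail.trans (le_of_eq ?_)
    rw [Finset.sum_filter, ← hfil, Finset.sum_filter, ← Fin.sum_univ_eq_sum_range
      (fun n => if r ≤ n then P n else 0) d]
    refine Finset.sum_congr rfl fun i _ => ?_
    rw [hPval _ i.2]
  have hεdr : ε ≤ ((d - r : ℕ) : ℝ) * q := by
    refine hIco.trans ?_
    have h := Finset.sum_le_card_nsmul (Finset.Ico r d) P q (fun n hn => by
      rw [← hPr]; exact hPanti (Finset.mem_Ico.mp hn).1)
    simpa [Nat.card_Ico, nsmul_eq_mul] using h
  have hdrcast : ((d - r : ℕ) : ℝ) = (d : ℝ) - (r : ℝ) := by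
    rw [Nat.cast_sub hrd.le]
  have hq0 : 0 < q := by
    by_contra h
    push_neg at h
    have h1 : ((d - r : ℕ) : ℝ) * q ≤ 0 :=
      mul_nonpos_of_nonneg_of_nonpos (Nat.cast_nonneg _) h
    linarith
  have hlow : ε / ((d : ℝ) - (r : ℝ)) ≤ q := by
    rw [div_le_iff₀ (by linarith)]
    rw [hdrcast] at hεdr
    linarith
  have hheadsum : (r : ℝ) * q ≤ ∑ n ∈ Finset.range r, P n := by
    have h := Finset.card_nsmul_le_sum (Finset.range r) P q (fun n hn => by
      rw [← hPr]; exact hPanti (le_of_lt (Finset.mem_range.mp hn)))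
    simpa [nsmul_eq_mul] using h
  have hsplit : ∑ n ∈ Finset.range r, P n + ∑ n ∈ Finset.Ico r d, P n = 1 := by
    rw [Finset.sum_range_add_sum_Ico _ hrd.le, hPsum]
  have hrq : (r : ℝ) * q ≤ 1 - ε := by linarith
  have hhigh : q ≤ (1 - ε) / (r : ℝ) := by
    rw [le_div_iff₀ (by exact_mod_cast hr)]
    linarith
  set k := ⌊ε / q⌋₊ with hkdef
  have hkq : (k : ℝ) * q ≤ ε := by
    have h := Nat.floor_le (le_of_lt (div_pos hε hq0))
    calc (k : ℝ) * q ≤ (ε / q) * q := mul_le_mul_of_nonneg_right h hq0.le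
      _ = ε := div_mul_cancel₀ _ (ne_of_gt hq0)
  have hεk : ε < ((k : ℝ) + 1) * q := by
    have h := Nat.lt_floor_add_one (ε / q)
    have h2 : ε < ((k : ℝ) + 1) * q := by
      have := (div_lt_iff₀ hq0).mp h
      push_cast at this ⊢
      linarith
    exact h2
  have hkd : k + r ≤ d := by
    have h1 : ε / q ≤ ((d - r : ℕ) : ℝ) := by
      rw [div_le_iff₀ hq0]
      calc ε ≤ ((d - r : ℕ) : ℝ) * q := hεdr
        _ = ((d - r : ℕ) : ℝ) * q := rfl
    have h2 : k ≤ d - r := by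
      calc k = ⌊ε / q⌋₊ := rfl
        _ ≤ ⌊(((d - r : ℕ) : ℝ))⌋₊ := Nat.floor_le_floor h1
        _ = d - r := Nat.floor_natCast _
    omega
  set A : ℝ := 1 - ε - ((r : ℝ) - 1) * q with hAdef
  set B : ℝ := ε - q * (k : ℝ) with hBdef
  set V : ℕ → ℝ := fun n => if n = 0 then A else if n ≤ k + r - 1 then q
    else if n = k + r then B else 0 with hVdef
  have hrk1 : 1 ≤ k + r := by omega
  -- sum of V over range m, case m ≤ k + r
  have hVA : ∀ m : ℕ, 1 ≤ m → m ≤ k + r →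
      ∑ n ∈ Finset.range m, V n = A + ((m : ℝ) - 1) * q := by
    intro m h1 h2
    obtain ⟨m', rfl⟩ : ∃ m', m = m' + 1 := ⟨m - 1, by omega⟩
    rw [Finset.sum_range_succ']
    have hV0 : V 0 = A := by simp [hVdef]
    have hq' : ∀ i ∈ Finset.range m', V (i + 1) = q := by
      intro i hi
      have hi' : i < m' := Finset.mem_range.mp hi
      simp only [hVdef]
      rw [if_neg (by omega), if_pos (by omega)]
    rw [Finset.sum_congr rfl hq', hV0, Finset.sum_const, nsmul_eq_mul, Finset.card_range]
    push_cast
    ring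
  -- sum of V over range m, case m > k + r
  have hVB : ∀ m : ℕ, k + r < m → ∑ n ∈ Finset.range m, V n = 1 := by
    intro m hm
    have hsub : Finset.range (k + r + 1) ⊆ Finset.range m := Finset.range_subset_range.mpr (by omega)
    have hzero : ∀ n ∈ Finset.range m, n ∉ Finset.range (k + r + 1) → V n = 0 := by
      intro n _ hn
      have hn' : k + r + 1 ≤ n := by
        by_contra hc
        exact hn (Finset.mem_range.mpr (by omega))
      simp only [hVdef]
      rw [if_neg (by omega), if_neg (by omega), if_neg (by omega)]
    rw [← Finset.sum_subset hsub hzero, Finset.sum_range_succ, hVA (k + r) hrk1 le_rfl]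
    have hVkr : V (k + r) = B := by
      simp only [hVdef]
      rw [if_neg (by omega), if_neg (by omega)]
      simp
    rw [hVkr]
    have hcast : ((k + r : ℕ) : ℝ) = (k : ℝ) + (r : ℝ) := by push_cast; ring
    rw [hcast, hAdef, hBdef]
    ring
  -- partial sums of P are at most 1
  have hPle1 : ∀ m : ℕ, ∑ n ∈ Finset.range m, P n ≤ 1 := by
    intro m
    have h1 : ∑ n ∈ Finset.range m, P n ≤ ∑ n ∈ Finset.range (max m d), P n :=
      Finset.sum_le_sum_of_subset_of_nonneg (Finset.range_subset_range.mpr (le_max_left _ _))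
        (fun n _ _ => hPnn n)
    have h2 : ∑ n ∈ Finset.range (max m d), P n = ∑ n ∈ Finset.range d, P n := by
      symm
      refine Finset.sum_subset (Finset.range_subset_range.mpr (le_max_right _ _)) ?_
      intro n _ hn
      have hdn : d ≤ n := by
        by_contra hc
        exact hn (Finset.mem_range.mpr (by omega))
      simp only [hPdef]
      exact dif_neg (by omega)
    rw [h2, hPsum] at h1
    exact h1
  -- key partial sum inequality for P
  have key1 : ∀ m : ℕ, 1 ≤ m → m ≤ d →
      ∑ n ∈ Finset.range m, P n ≤ A + ((m : ℝ) - 1) * q := by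
    intro m h1 hmd
    have hsplitm : ∑ n ∈ Finset.range m, P n + ∑ n ∈ Finset.Ico m d, P n = 1 := by
      rw [Finset.sum_range_add_sum_Ico _ hmd, hPsum]
    have hm1 : (1 : ℝ) ≤ (m : ℝ) := by exact_mod_cast h1
    rcases le_or_gt m r with hmr | hrm
    · have hIcoSplit : ∑ n ∈ Finset.Ico m r, P n + ∑ n ∈ Finset.Ico r d, P n
          = ∑ n ∈ Finset.Ico m d, P n := Finset.sum_Ico_consecutive _ hmr hrd.le
      have hmid : ((r - m : ℕ) : ℝ) * q ≤ ∑ n ∈ Finset.Ico m r, P n := by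
        have h := Finset.card_nsmul_le_sum (Finset.Ico m r) P q (fun n hn => by
          rw [← hPr]; exact hPanti (le_of_lt (Finset.mem_Ico.mp hn).2))
        simpa [Nat.card_Ico, nsmul_eq_mul] using h
      have hcast : ((r - m : ℕ) : ℝ) = (r : ℝ) - (m : ℝ) := by
        rw [Nat.cast_sub hmr]
      rw [hcast] at hmid
      rw [hAdef]
      linarith
    · have hIcoSplit : ∑ n ∈ Finset.Ico r m, P n + ∑ n ∈ Finset.Ico m d, P n
          = ∑ n ∈ Finset.Ico r d, P n := Finset.sum_Ico_consecutive _ hrm.le hmd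
      have hmid : ∑ n ∈ Finset.Ico r m, P n ≤ ((m - r : ℕ) : ℝ) * q := by
        have h := Finset.sum_le_card_nsmul (Finset.Ico r m) P q (fun n hn => by
          rw [← hPr]; exact hPanti (Finset.mem_Ico.mp hn).1)
        simpa [Nat.card_Ico, nsmul_eq_mul] using h
      have hcast : ((m - r : ℕ) : ℝ) = (m : ℝ) - (r : ℝ) := by
        rw [Nat.cast_sub hrm.le]
      rw [hcast] at hmid
      rw [hAdef]
      linarith
  -- total sum of V
  have hVtotal : ∑ n ∈ Finset.range d, V n = 1 := by
    rcases lt_or_eq_of_le hkd with h | h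
    · exact hVB d h
    · rw [hVA d (by omega) (le_of_eq h.symm)]
      have hεeq : ε = (k : ℝ) * q := by
        have h2 : ((d - r : ℕ) : ℝ) = (k : ℝ) := by
          have : d - r = k := by omega
          rw [this]
        rw [h2] at hεdr
        linarith
      have hdc : (d : ℝ) = (k : ℝ) + (r : ℝ) := by exact_mod_cast congrArg Nat.cast h.symm
      rw [hAdef, hdc, hεeq]
      ring
  -- comparison of partial sums
  have hPV : ∀ m : ℕ, m ≤ d → ∑ n ∈ Finset.range m, P n ≤ ∑ n ∈ Finset.range m, V n := by
    intro m hmd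
    rcases Nat.eq_zero_or_pos m with rfl | hm1
    · simp
    rcases le_or_gt m (k + r) with hmk | hmk
    · rw [hVA m hm1 hmk]
      exact key1 m hm1 hmd
    · rw [hVB m hmk]
      exact hPle1 m
  refine ⟨q, hlow, hhigh, fun j => V (j : ℕ), fun j => rfl, ?_, ?_⟩
  · -- equal sums
    have h1 : ∑ j : Fin d, V (j : ℕ) = 1 := by
      rw [Fin.sum_univ_eq_sum_range]
      exact hVtotal
    rw [h1, hsum]
  · -- majorization
    intro m
    rcases le_or_gt m d with hmd | hmd
    · set t : Finset (Fin d) := Finset.univ.map (Fin.castLEEmb hmd) with htdef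
      have htc : t.card = m := by
        rw [htdef, Finset.card_map, Finset.card_univ, Fintype.card_fin]
      have htv : ∑ j ∈ t, V (j : ℕ) = ∑ n ∈ Finset.range m, V n := by
        rw [htdef, Finset.sum_map, ← Fin.sum_univ_eq_sum_range]
        rfl
      have hbdd : BddAbove {x : ℝ | ∃ s : Finset (Fin d), s.card = m ∧
          x = ∑ j ∈ s, V (j : ℕ)} := by
        apply Set.Finite.bddAbove
        have hsub : {x : ℝ | ∃ s : Finset (Fin d), s.card = m ∧ x = ∑ j ∈ s, V (j : ℕ)} ⊆
            Set.range (fun s : Finset (Fin d) => ∑ j ∈ s, V (j : ℕ)) := by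
          rintro x ⟨s, _, rfl⟩
          exact ⟨s, rfl⟩
        exact (Set.finite_range _).subset hsub
      simp only [sumLargest]
      apply csSup_le
      · exact ⟨∑ j ∈ t, p j, t, htc, rfl⟩
      · rintro x ⟨s, hs, rfl⟩
        have h1 : ∑ j ∈ s, p j ≤ ∑ n ∈ Finset.range m, P n :=
          sum_le_sum_initial' p hmono P hPval s hs hmd
        have h2 : ∑ n ∈ Finset.range m, V n ≤
            sSup {x : ℝ | ∃ s : Finset (Fin d), s.card = m ∧ x = ∑ j ∈ s, V (j : ℕ)} :=
          le_csSup hbdd ⟨t, htc, htv.symm⟩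
        have h3 := hPV m hmd
        linarith
    · have hempty : ∀ u : Fin d → ℝ,
          {x : ℝ | ∃ s : Finset (Fin d), s.card = m ∧ x = ∑ j ∈ s, u j} = ∅ := by
        intro u
        ext x
        simp only [Set.mem_setOf_eq, Set.mem_empty_iff_false, iff_false]
        rintro ⟨s, hs, -⟩
        have h1 := Finset.card_le_univ s
        rw [hs] at h1
        simp only [Finset.card_univ, Fintype.card_fin] at h1
        omega
      simp only [sumLargest]
      rw [hempty, hempty, Real.sSup_empty]
end

section
/- Let r ≥ 1 be an integer and ε ∈ (0, 1]. For real k > 0 define g_{ε,r}(k) := f(k)·(1 − ε r (k + r) / (k (r + 1))), where f(k) := ((∏_{i=0}^{r−1} (k + i)) / r!) · (ε/k)^r. Then for all reals 0 < a ≤ b and every k ∈ [a, b], one has g_{ε,r}(k) ≥ min(g_{ε,r}(a), g_{ε,r}(b)); that is, the minimum of g_{ε,r} over the interval [a, b] is attained at one of the endpoints. -/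
/-- `g_{ε,r}(k) = C(r+k-1, r)·(ε/k)^r·(1 - εr(k+r)/(k(r+1)))` for real `k > 0`, where
`C(r+k-1, r) = (∏_{i=0}^{r-1}(k+i))/r!` is the generalized binomial coefficient. -/
noncomputable def gReal (r : ℕ) (ε k : ℝ) : ℝ :=
  ((∏ i ∈ Finset.range r, (k + (i : ℝ))) / (Nat.factorial r : ℝ)) * (ε / k) ^ r *
    (1 - ε * (r : ℝ) * (k + (r : ℝ)) / (k * ((r : ℝ) + 1)))

/-- Auxiliary product part. -/
noncomputable def Qfun (r : ℕ) (t : ℝ) : ℝ := ∏ i ∈ Finset.range r, (1 + (i : ℝ) * t)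

/-- Auxiliary linear part. -/
noncomputable def Lfun (r : ℕ) (ε t : ℝ) : ℝ := ((r : ℝ) + 1) - ε * r * (1 + r * t)

/-- `g` in terms of `t = 1/k`. -/
noncomputable def Hfun (r : ℕ) (ε t : ℝ) : ℝ := Qfun r t * Lfun r ε t

lemma Qfun_pos (r : ℕ) {t : ℝ} (ht : 0 ≤ t) : 0 < Qfun r t :=
  Finset.prod_pos (fun i _ => by positivity)

lemma Qfun_mono (r : ℕ) {s t : ℝ} (hs : 0 ≤ s) (hst : s ≤ t) : Qfun r s ≤ Qfun r t := by
  apply Finset.prod_le_prod (fun i _ => by positivity)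
  intro i _
  nlinarith [Nat.cast_nonneg (α := ℝ) i]

lemma gReal_eq (r : ℕ) (ε : ℝ) {k : ℝ} (hk : 0 < k) :
    gReal r ε k = (ε ^ r / ((Nat.factorial r : ℝ) * ((r : ℝ) + 1))) * Hfun r ε (1 / k) := by
  have hfac : (0 : ℝ) < (Nat.factorial r : ℝ) := by positivity
  have hprod : Qfun r (1 / k) = (∏ i ∈ Finset.range r, (k + (i : ℝ))) * (1 / k) ^ r := by
    unfold Qfun
    rw [show ((1:ℝ)/k) ^ r = ∏ _i ∈ Finset.range r, ((1:ℝ)/k) by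
      rw [Finset.prod_const, Finset.card_range]]
    rw [← Finset.prod_mul_distrib]
    apply Finset.prod_congr rfl
    intro i _
    field_simp
  unfold gReal Hfun Lfun
  rw [hprod]
  have hr1 : (0 : ℝ) < (r : ℝ) + 1 := by positivity
  field_simp
  ring

/-- Key quasiconcavity-type lemma: on `[t₁, t₂] ⊆ (0,∞)`, `Hfun` is at least the min of its
endpoint values. -/
lemma Hfun_min (r : ℕ) (ε : ℝ) (hε0 : 0 < ε) {t1 t2 s : ℝ} (h1 : 0 < t1)
    (hs1 : t1 ≤ s) (hs2 : s ≤ t2) :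
    min (Hfun r ε t1) (Hfun r ε t2) ≤ Hfun r ε s := by
  have hs0 : 0 < s := lt_of_lt_of_le h1 hs1
  have ht2 : 0 < t2 := lt_of_lt_of_le hs0 hs2
  have hQ1 : 0 < Qfun r t1 := Qfun_pos r h1.le
  have hQs : 0 < Qfun r s := Qfun_pos r hs0.le
  have hQ2 : 0 < Qfun r t2 := Qfun_pos r ht2.le
  have hQs2 : Qfun r s ≤ Qfun r t2 := Qfun_mono r hs0.le hs2
  have hcoef : 0 ≤ ε * r * r := by positivity
  rcases lt_or_ge (Lfun r ε s) 0 with hLs | hLs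
  · -- L s < 0 : H is decreasing past the root
    have hL2 : Lfun r ε t2 ≤ Lfun r ε s := by
      unfold Lfun; nlinarith
    refine le_trans (min_le_right _ _) ?_
    unfold Hfun
    nlinarith
  · rcases lt_or_ge (Lfun r ε t2) 0 with hL2 | hL2
    · -- H t2 < 0 ≤ H s
      refine le_trans (min_le_right _ _) ?_
      unfold Hfun
      nlinarith
    · -- all factors nonnegative at both endpoints: log-concavity via AM-GM
      have hL1 : Lfun r ε s ≤ Lfun r ε t1 := by
        unfold Lfun; nlinarith
      have hL1' : 0 ≤ Lfun r ε t1 := le_trans hLs hL1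
      rcases eq_or_lt_of_le (le_trans hs1 hs2) with heq | hlt
      · -- t1 = t2, hence s = t1
        have h1s : s = t1 := le_antisymm (heq ▸ hs2) hs1
        rw [h1s]
        exact min_le_left _ _
      · set lam : ℝ := (t2 - s) / (t2 - t1) with hlam
        set mu : ℝ := (s - t1) / (t2 - t1) with hmu
        have hd : 0 < t2 - t1 := by linarith
        have hlam0 : 0 ≤ lam := div_nonneg (by linarith) hd.le
        have hmu0 : 0 ≤ mu := div_nonneg (by linarith) hd.le
        have hsum : lam + mu = 1 := by
          rw [hlam, hmu, ← add_div]
          field_simp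
          ring
        have hconv : ∀ x y : ℝ, x + y * s = lam * (x + y * t1) + mu * (x + y * t2) := by
          intro x y
          rw [hlam, hmu]; field_simp
          ring
        -- per-factor AM-GM
        have hQ : Qfun r t1 ^ lam * Qfun r t2 ^ mu ≤ Qfun r s := by
          unfold Qfun
          rw [← Real.finset_prod_rpow _ _ (fun i _ => by positivity) lam,
              ← Real.finset_prod_rpow _ _ (fun i _ => by positivity) mu,
              ← Finset.prod_mul_distrib]
          apply Finset.prod_le_prod
          · intro i _
            have : (0:ℝ) ≤ 1 + (i:ℝ) * t1 := by positivity
            have : (0:ℝ) ≤ 1 + (i:ℝ) * t2 := by positivity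
            positivity
          · intro i _
            have h := Real.geom_mean_le_arith_mean2_weighted hlam0 hmu0
              (p₁ := 1 + (i:ℝ) * t1) (p₂ := 1 + (i:ℝ) * t2) (by positivity) (by positivity) hsum
            calc (1 + (i:ℝ) * t1) ^ lam * (1 + (i:ℝ) * t2) ^ mu
                ≤ lam * (1 + (i:ℝ) * t1) + mu * (1 + (i:ℝ) * t2) := h
              _ = 1 + (i:ℝ) * s := (hconv 1 ((i:ℝ))).symm
        have hL : Lfun r ε t1 ^ lam * Lfun r ε t2 ^ mu ≤ Lfun r ε s := by
          have h := Real.geom_mean_le_arith_mean2_weighted hlam0 hmu0 hL1' hL2 hsum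
          have hLconv : Lfun r ε s = lam * Lfun r ε t1 + mu * Lfun r ε t2 := by
            unfold Lfun
            have := hconv (((r:ℝ)+1) - ε * r) (-(ε * r * r))
            have hexp : ∀ t : ℝ, ((r:ℝ)+1) - ε * r * (1 + r * t)
                = (((r:ℝ)+1) - ε * r) + (-(ε * r * r)) * t := by intro t; ring
            rw [hexp s, hexp t1, hexp t2]; exact this
          rw [hLconv]; exact h
        -- combine
        set m := min (Hfun r ε t1) (Hfun r ε t2) with hm
        have hH1 : 0 ≤ Hfun r ε t1 := mul_nonneg hQ1.le hL1'
        have hH2 : 0 ≤ Hfun r ε t2 := mul_nonneg hQ2.le hL2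
        have hm0 : 0 ≤ m := le_min hH1 hH2
        have step1 : m = m ^ lam * m ^ mu := by
          rw [← Real.rpow_add' hm0 (by rw [hsum]; norm_num), hsum, Real.rpow_one]
        calc m = m ^ lam * m ^ mu := step1
          _ ≤ Hfun r ε t1 ^ lam * Hfun r ε t2 ^ mu := by
              apply mul_le_mul
              · exact Real.rpow_le_rpow hm0 (min_le_left _ _) hlam0
              · exact Real.rpow_le_rpow hm0 (min_le_right _ _) hmu0
              · exact Real.rpow_nonneg hm0 _
              · exact Real.rpow_nonneg hH1 _
          _ = (Qfun r t1 ^ lam * Qfun r t2 ^ mu) * (Lfun r ε t1 ^ lam * Lfun r ε t2 ^ mu) := by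
              unfold Hfun
              rw [Real.mul_rpow hQ1.le hL1', Real.mul_rpow hQ2.le hL2]
              ring
          _ ≤ Qfun r s * Lfun r ε s := by
              apply mul_le_mul hQ hL
              · exact mul_nonneg (Real.rpow_nonneg hL1' _) (Real.rpow_nonneg hL2 _)
              · exact hQs.le
          _ = Hfun r ε s := rfl

/-- The minimum of `g_{ε,r}` over any interval `[a, b] ⊆ (0, ∞)` is attained at an endpoint:
for every `k ∈ [a, b]`, `g_{ε,r}(k) ≥ min(g_{ε,r}(a), g_{ε,r}(b))`. -/
theorem stmt11 (r : ℕ) (hr : 1 ≤ r) (ε : ℝ) (hε0 : 0 < ε) (hε1 : ε ≤ 1)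
    (a b : ℝ) (ha : 0 < a) (hab : a ≤ b) (k : ℝ) (hak : a ≤ k) (hkb : k ≤ b) :
    min (gReal r ε a) (gReal r ε b) ≤ gReal r ε k := by
  have hk : 0 < k := lt_of_lt_of_le ha hak
  have hb : 0 < b := lt_of_lt_of_le hk hkb
  have hC : 0 ≤ ε ^ r / ((Nat.factorial r : ℝ) * ((r : ℝ) + 1)) := by positivity
  rw [gReal_eq r ε ha, gReal_eq r ε hb, gReal_eq r ε hk]
  have hmin : min (Hfun r ε (1/b)) (Hfun r ε (1/a)) ≤ Hfun r ε (1/k) := by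
    apply Hfun_min r ε hε0 (by positivity)
    · exact one_div_le_one_div_of_le hk hkb
    · exact one_div_le_one_div_of_le ha hak
  rcases le_total (Hfun r ε (1/a)) (Hfun r ε (1/b)) with h|h
  · have h2 : Hfun r ε (1/a) ≤ Hfun r ε (1/k) := le_trans (by rw [min_eq_right h]) hmin
    exact le_trans (min_le_left _ _) (mul_le_mul_of_nonneg_left h2 hC)
  · have h2 : Hfun r ε (1/b) ≤ Hfun r ε (1/k) := le_trans (by rw [min_eq_left h]) hmin
    exact le_trans (min_le_right _ _) (mul_le_mul_of_nonneg_left h2 hC)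
end

section
/- Fix an integer r ≥ 1 and a real ε ∈ (0, 1]. Then, as the integer d tends to infinity (over d > r), the quantity g_{d−r}(ε, r, ε/(d−r)) converges to ε^r (r + 1 − ε r) / (r + 1)!, where for a nonnegative integer k and real q, g_k(ε, r, q) := C(r+k−1, r+1)·q^{r+1} + C(r+k−1, r)·(1 − (r+k−1)q)·q^{r} + C(r+k−1, r−1)·(1 − ε − (r−1)q)·(ε − qk)·q^{r−1}, with C(·,·) the binomial coefficient. -/
open Filter Finset

private lemma factor_lim (r i : ℕ) :
    Tendsto (fun k : ℕ => ((r + k - 1 - i : ℕ) : ℝ) / k) atTop (nhds 1) := by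
  have h : Tendsto (fun k : ℕ => 1 + ((r : ℝ) - 1 - i) / k) atTop (nhds 1) := by
    have := tendsto_const_div_atTop_nhds_zero_nat ((r : ℝ) - 1 - (i : ℝ))
    simpa using tendsto_const_nhds.add this
  refine h.congr' ?_
  filter_upwards [eventually_ge_atTop (i + 1)] with k hk
  have h1 : i ≤ r + k - 1 := by omega
  have h2 : 1 ≤ r + k := by omega
  have hk0 : (k : ℝ) ≠ 0 := Nat.cast_ne_zero.mpr (by omega)
  rw [Nat.cast_sub h1, Nat.cast_sub h2]
  push_cast
  field_simp
  ring

private lemma choose_div_lim (r j : ℕ) :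
    Tendsto (fun k : ℕ => (((r + k - 1).choose j : ℕ) : ℝ) / (k : ℝ) ^ j) atTop
      (nhds (1 / (j.factorial : ℝ))) := by
  have hprod : Tendsto (fun k : ℕ => ∏ i ∈ range j, ((r + k - 1 - i : ℕ) : ℝ) / k)
      atTop (nhds 1) := by
    have := tendsto_finset_prod (range j)
      (fun i _ => factor_lim r i)
    simpa using this
  have := hprod.const_mul (1 / (j.factorial : ℝ))
  rw [mul_one] at this
  refine this.congr' ?_
  filter_upwards [eventually_ge_atTop 1] with k hk
  have hk0 : (k : ℝ) ≠ 0 := Nat.cast_ne_zero.mpr (by omega)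
  have hd : ((r + k - 1).choose j : ℕ) * j.factorial = (r + k - 1).descFactorial j := by
    rw [Nat.descFactorial_eq_factorial_mul_choose]; ring
  have hcast : (((r + k - 1).choose j : ℕ) : ℝ) =
      ((r + k - 1).descFactorial j : ℝ) / (j.factorial : ℝ) := by
    rw [eq_div_iff (by exact_mod_cast j.factorial_ne_zero)]
    exact_mod_cast congrArg (Nat.cast : ℕ → ℝ) hd
  rw [hcast, Nat.descFactorial_eq_prod_range]
  push_cast
  rw [prod_div_distrib, prod_const, card_range]
  field_simp

/-- `g_k(ε, r, q) := C(r+k-1, r+1) q^{r+1} + C(r+k-1, r)(1 - (r+k-1)q) q^r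
+ C(r+k-1, r-1)(1 - ε - (r-1)q)(ε - qk) q^{r-1}`. -/
noncomputable def gk (r k : ℕ) (ε q : ℝ) : ℝ :=
  (Nat.choose (r + k - 1) (r + 1) : ℝ) * q ^ (r + 1)
    + (Nat.choose (r + k - 1) r : ℝ) * (1 - ((r : ℝ) + (k : ℝ) - 1) * q) * q ^ r
    + (Nat.choose (r + k - 1) (r - 1) : ℝ) * (1 - ε - ((r : ℝ) - 1) * q) *
        (ε - q * (k : ℝ)) * q ^ (r - 1)

private lemma key (r : ℕ) (hr : 1 ≤ r) (ε : ℝ) :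
    Tendsto (fun k : ℕ => gk r k ε (ε / (k : ℝ))) atTop
      (nhds (ε ^ r * ((r : ℝ) + 1 - ε * (r : ℝ)) / (Nat.factorial (r + 1) : ℝ))) := by
  have hmid : Tendsto (fun k : ℕ => 1 - ε * (1 + ((r : ℝ) - 1) / k)) atTop (nhds (1 - ε)) := by
    have : Tendsto (fun k : ℕ => (1 : ℝ) + ((r : ℝ) - 1) / k) atTop (nhds (1 + 0)) :=
      tendsto_const_nhds.add (tendsto_const_div_atTop_nhds_zero_nat ((r : ℝ) - 1))
    have := this.const_mul ε
    simpa using tendsto_const_nhds.sub this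
  have hA := (choose_div_lim r (r + 1)).mul_const (ε ^ (r + 1))
  have hB := ((choose_div_lim r r).mul_const (ε ^ r)).mul hmid
  have hsum := hA.add hB
  have hL : ε ^ r * ((r : ℝ) + 1 - ε * (r : ℝ)) / (Nat.factorial (r + 1) : ℝ)
      = 1 / (((r + 1).factorial : ℝ)) * ε ^ (r + 1)
        + 1 / ((r.factorial : ℝ)) * ε ^ r * (1 - ε) := by
    have h1 : (((r + 1).factorial : ℕ) : ℝ) = ((r : ℝ) + 1) * (r.factorial : ℝ) := by
      rw [Nat.factorial_succ]; push_cast; ring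
    have h2 : (r.factorial : ℝ) ≠ 0 := by exact_mod_cast r.factorial_ne_zero
    have h3 : (r : ℝ) + 1 ≠ 0 := by positivity
    rw [h1]; field_simp; ring
  rw [hL]
  refine hsum.congr' ?_
  filter_upwards [eventually_ge_atTop 1] with k hk
  have hk0 : (k : ℝ) ≠ 0 := Nat.cast_ne_zero.mpr (by omega)
  have h3 : ε - (ε / (k : ℝ)) * (k : ℝ) = 0 := by field_simp; ring
  simp only [gk, h3, mul_zero, zero_mul, add_zero, div_pow]
  field_simp
  ring

/-- Large-dimension limit of the third endpoint value: as `d → ∞`,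
`g_{d-r}(ε, r, ε/(d-r)) → ε^r (r + 1 - ε r) / (r + 1)!`. -/
theorem stmt13 (r : ℕ) (hr : 1 ≤ r) (ε : ℝ) (hε0 : 0 < ε) (hε1 : ε ≤ 1) :
    Filter.Tendsto (fun d : ℕ => gk r (d - r) ε (ε / ((d - r : ℕ) : ℝ)))
      Filter.atTop
      (nhds (ε ^ r * ((r : ℝ) + 1 - ε * (r : ℝ)) / (Nat.factorial (r + 1) : ℝ))) := by
  exact (key r hr ε).comp (tendsto_sub_atTop_nat r)
end

section
/- For all positive integers r and k and every real ε ∈ (0, 1], the following inequality holds: C(r+k−1, r+1)·ε·(r+1) + C(r+k−1, r)·(k r − ε (r+1)(r+k−1)) + C(r+k−1, r−1)·k·(ε (r+k−1) − k) ≤ 0, where C(·,·) denotes the binomial coefficient (with C(n, m) = 0 when m > n). -/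
/-- Nonpositivity of `∂g_k/∂q` at the endpoint `q = ε/k` (after clearing positive factors):
for all positive integers `r`, `k` and `ε ∈ (0, 1]`,
`C(r+k-1, r+1)·ε·(r+1) + C(r+k-1, r)·(kr - ε(r+1)(r+k-1)) + C(r+k-1, r-1)·k·(ε(r+k-1) - k) ≤ 0`. -/
theorem stmt15 (r k : ℕ) (hr : 0 < r) (hk : 0 < k) (ε : ℝ) (hε0 : 0 < ε) (hε1 : ε ≤ 1) :
    (Nat.choose (r + k - 1) (r + 1) : ℝ) * ε * ((r : ℝ) + 1)
      + (Nat.choose (r + k - 1) r : ℝ) *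
          ((k : ℝ) * (r : ℝ) - ε * ((r : ℝ) + 1) * ((r : ℝ) + (k : ℝ) - 1))
      + (Nat.choose (r + k - 1) (r - 1) : ℝ) * (k : ℝ) *
          (ε * ((r : ℝ) + (k : ℝ) - 1) - (k : ℝ)) ≤ 0 := by
  set n := r + k - 1 with hn
  have h1 : n.choose (r + 1) * (r + 1) = n.choose r * (n - r) :=
    Nat.choose_succ_right_eq n r
  have h2 : n.choose ((r - 1) + 1) * ((r - 1) + 1) = n.choose (r - 1) * (n - (r - 1)) :=
    Nat.choose_succ_right_eq n (r - 1)
  have hr1 : r - 1 + 1 = r := Nat.succ_pred_eq_of_pos hr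
  rw [hr1] at h2
  have hnr : n - r = k - 1 := by omega
  have hnr1 : n - (r - 1) = k := by omega
  rw [hnr] at h1
  rw [hnr1] at h2
  have h1' : (n.choose (r + 1) : ℝ) * (r + 1) = (n.choose r : ℝ) * ((k : ℝ) - 1) := by
    have := congrArg (Nat.cast : ℕ → ℝ) h1
    push_cast [Nat.cast_sub hk] at this
    linarith [this]
  have h2' : (n.choose r : ℝ) * r = (n.choose (r - 1) : ℝ) * k := by
    exact_mod_cast congrArg (Nat.cast : ℕ → ℝ) h2
  have key : (Nat.choose n (r + 1) : ℝ) * ε * ((r : ℝ) + 1)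
      + (Nat.choose n r : ℝ) *
          ((k : ℝ) * (r : ℝ) - ε * ((r : ℝ) + 1) * ((r : ℝ) + (k : ℝ) - 1))
      + (Nat.choose n (r - 1) : ℝ) * (k : ℝ) *
          (ε * ((r : ℝ) + (k : ℝ) - 1) - (k : ℝ))
      = -ε * (n.choose r : ℝ) * r := by
    linear_combination ε * h1' + ((k : ℝ) - ε * ((r : ℝ) + (k : ℝ) - 1)) * h2'
  rw [key]
  have : (0:ℝ) ≤ ε * (n.choose r : ℝ) * r := by positivity
  linarith
end

section
/- Let ε be a real with 0 < ε ≤ 1/√2, let k be a positive integer, and let ε₁, …, ε_k ∈ [0, 1] satisfy ∏_{i=1}^k (1 − ε_i²) = 1 − ε²/4. Then ε²/4 ≤ Σ_{i=1}^k ε_i² ≤ 2ε²/7. -/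
/-- Two-sided bound on `Σ εᵢ²`: if `0 < ε ≤ 1/√2`, each `εᵢ ∈ [0, 1]`, and
`∏ᵢ (1 - εᵢ²) = 1 - ε²/4`, then `ε²/4 ≤ Σᵢ εᵢ² ≤ 2ε²/7`. -/
theorem stmt17 (ε : ℝ) (hε0 : 0 < ε) (hε1 : ε ≤ 1 / Real.sqrt 2) (k : ℕ) (hk : 0 < k)
    (e : Fin k → ℝ) (he0 : ∀ i, 0 ≤ e i) (he1 : ∀ i, e i ≤ 1)
    (hprod : ∏ i, (1 - e i ^ 2) = 1 - ε ^ 2 / 4) :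
    ε ^ 2 / 4 ≤ ∑ i, e i ^ 2 ∧ ∑ i, e i ^ 2 ≤ 2 * ε ^ 2 / 7 := by
  have hs : Real.sqrt 2 ^ 2 = 2 := Real.sq_sqrt (by norm_num)
  have hε2 : ε ^ 2 ≤ 1 / 2 := by
    have h := pow_le_pow_left₀ hε0.le hε1 2
    rw [div_pow, one_pow, hs] at h
    linarith
  have hpos : (0:ℝ) < 1 - ε ^ 2 / 4 := by linarith
  have hfac : ∀ i, 0 < 1 - e i ^ 2 := by
    intro i
    rcases lt_or_eq_of_le (show (0:ℝ) ≤ 1 - e i ^ 2 by nlinarith [he0 i, he1 i]) with h | h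
    · exact h
    · exfalso
      have h0 : ∏ j, (1 - e j ^ 2) = 0 := Finset.prod_eq_zero (Finset.mem_univ i) h.symm
      rw [hprod] at h0; linarith
  -- lower bound (Weierstrass product inequality)
  have key : ∀ s : Finset (Fin k),
      1 - ∑ i ∈ s, e i ^ 2 ≤ ∏ i ∈ s, (1 - e i ^ 2) := by
    intro s
    induction s using Finset.induction with
    | empty => simp
    | @insert a s ha ih =>
      rw [Finset.sum_insert ha, Finset.prod_insert ha]
      have hS : (0:ℝ) ≤ ∑ i ∈ s, e i ^ 2 :=
        Finset.sum_nonneg fun i _ => sq_nonneg _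
      have hP : (0:ℝ) ≤ ∏ i ∈ s, (1 - e i ^ 2) :=
        Finset.prod_nonneg fun i _ => (hfac i).le
      nlinarith [mul_nonneg (hfac a).le (sub_nonneg.mpr ih), mul_nonneg (sq_nonneg (e a)) hS]
  have hlow : ε ^ 2 / 4 ≤ ∑ i, e i ^ 2 := by
    have := key Finset.univ
    rw [hprod] at this
    linarith
  refine ⟨hlow, ?_⟩
  -- upper bound via logarithms
  have hlog : ∀ i, e i ^ 2 ≤ -Real.log (1 - e i ^ 2) := by
    intro i
    have := Real.log_le_sub_one_of_pos (hfac i)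
    linarith
  have hsum : ∑ i, e i ^ 2 ≤ -Real.log (1 - ε ^ 2 / 4) := by
    calc ∑ i, e i ^ 2 ≤ ∑ i, -Real.log (1 - e i ^ 2) :=
          Finset.sum_le_sum fun i _ => hlog i
      _ = -∑ i, Real.log (1 - e i ^ 2) := by rw [Finset.sum_neg_distrib]
      _ = -Real.log (∏ i, (1 - e i ^ 2)) := by
          rw [Real.log_prod fun i _ => (hfac i).ne']
      _ = -Real.log (1 - ε ^ 2 / 4) := by rw [hprod]
  have h1 := Real.log_le_sub_one_of_pos (show (0:ℝ) < (1 - ε ^ 2 / 4)⁻¹ by positivity)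
  rw [Real.log_inv] at h1
  have hyx : (1 - ε ^ 2 / 4)⁻¹ * (1 - ε ^ 2 / 4) = 1 := inv_mul_cancel₀ hpos.ne'
  nlinarith [hyx, hsum, h1, sq_nonneg ε, hε2, hpos]
end
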